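/- arXiv:1903.07225 — 13 statements merged into one kernel-verified Lean document; each statement's English description precedes it below -/
import Mathlib

section
/- If a matrix τ ∈ ℍ₂ satisfies the singular relation ℓ ∈ ℤ⁵ and ℓ ≠ (0,0,0,0,0), then Δ(ℓ) > 0. (The positive definiteness of the imaginary part of τ forces every nontrivial singular relation satisfied by τ to have positive discriminant.) -/
/-- The discriminant of a singular relation `ℓ = (a, b, c, d, e) ∈ ℤ⁵`:
`Δ(ℓ) = b² − 4(ac + de)`. -/
def Delta (l : Fin 5 → ℤ) : ℤ :=
  (l 1) ^ 2 - 4 * ((l 0) * (l 2) + (l 3) * (l 4))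

set_option maxHeartbeats 1000000 in
/-- If `τ = [[τ₁, τ₂], [τ₂, τ₃]] ∈ ℍ₂` (a symmetric 2×2 complex matrix with positive
definite imaginary part) satisfies a nontrivial singular relation `ℓ ∈ ℤ⁵`, then
`Δ(ℓ) > 0`. -/
theorem stmt1 (τ : Matrix (Fin 2) (Fin 2) ℂ)
    (hsymm : τ.IsSymm)
    (hpos : (τ.map Complex.im).PosDef)
    (l : Fin 5 → ℤ) (hl : l ≠ 0)
    (hrel : (l 0 : ℂ) * τ 0 0 + (l 1 : ℂ) * τ 0 1 + (l 2 : ℂ) * τ 1 1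
      + (l 3 : ℂ) * ((τ 0 1) ^ 2 - τ 0 0 * τ 1 1) + (l 4 : ℂ) = 0) :
    0 < Delta l := by
  have h10 : τ 1 0 = τ 0 1 := hsymm.apply 0 1
  set x1 := (τ 0 0).re with hx1
  set x2 := (τ 0 1).re with hx2
  set x3 := (τ 1 1).re with hx3
  set y1 := (τ 0 0).im with hy1d
  set y2 := (τ 0 1).im with hy2d
  set y3 := (τ 1 1).im with hy3d
  set a := ((l 0 : ℤ) : ℝ) with ha
  set b := ((l 1 : ℤ) : ℝ) with hb
  set c := ((l 2 : ℤ) : ℝ) with hc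
  set d := ((l 3 : ℤ) : ℝ) with hd
  set e := ((l 4 : ℤ) : ℝ) with he
  have hy1 : 0 < y1 := by
    have := hpos.dotProduct_mulVec_pos (x := ![1, 0]) (by simp [Function.ne_iff])
    simpa [dotProduct, Matrix.mulVec, Fin.sum_univ_two] using this
  have hdet : 0 < y1 * y3 - y2 ^ 2 := by
    have := hpos.det_pos
    rw [Matrix.det_fin_two] at this
    simp only [Matrix.map_apply, h10] at this
    nlinarith
  have hy3 : 0 < y3 := by nlinarith [sq_nonneg y2]
  obtain ⟨hre, him⟩ := Complex.ext_iff.mp hrel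
  simp only [Complex.add_re, Complex.add_im, Complex.mul_re, Complex.mul_im,
    Complex.sub_re, Complex.sub_im, Complex.intCast_re, Complex.intCast_im,
    Complex.zero_re, Complex.zero_im, pow_two] at hre him
  have heqre : a * x1 + b * x2 + c * x3
      + d * (x2 ^ 2 - y2 ^ 2 - (x1 * x3 - y1 * y3)) + e = 0 := by
    linear_combination hre
  have heqim : a * y1 + b * y2 + c * y3
      + d * (2 * x2 * y2 - x1 * y3 - x3 * y1) = 0 := by
    linear_combination him
  clear hre him hrel hsymm hpos h10
  -- reduce the integer goal to a real inequality
  suffices h : (0 : ℝ) < b ^ 2 - 4 * (a * c + d * e) by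
    rw [ha, hb, hc, hd, he] at h
    unfold Delta
    exact_mod_cast h
  by_cases hd0 : d = 0
  · -- case d = 0
    rw [hd0] at heqre heqim
    rw [hd0]
    by_contra hco
    push_neg at hco
    have hac : b ^ 2 ≤ 4 * (a * c) := by linarith
    have hZ : a * y1 + b * y2 + c * y3 = 0 := by linarith
    have ha0 : a = 0 := by
      by_contra ha0
      have ha2 : 0 < a ^ 2 := by positivity
      have hX : 4 * a * y3 * (a * y1 + b * y2 + c * y3) = 0 := by
        rw [hZ]; ring
      nlinarith [sq_nonneg (b * y3 + 2 * a * y2), mul_pos ha2 hdet, mul_le_mul_of_nonneg_right hac (sq_nonneg y3)]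
    have hc0 : c = 0 := by
      by_contra hc0
      have hc2 : 0 < c ^ 2 := by positivity
      have hX : 4 * c * y1 * (a * y1 + b * y2 + c * y3) = 0 := by
        rw [hZ]; ring
      nlinarith [sq_nonneg (b * y1 + 2 * c * y2), mul_pos hc2 hdet, mul_le_mul_of_nonneg_right hac (sq_nonneg y1)]
    have hb0 : b = 0 := by nlinarith [sq_nonneg b]
    have he0 : e = 0 := by rw [ha0, hb0, hc0] at heqre; linarith
    rw [ha] at ha0; rw [hb] at hb0; rw [hc] at hc0; rw [hd] at hd0; rw [he] at he0
    have hz0 : l 0 = 0 := by exact_mod_cast ha0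
    have hz1 : l 1 = 0 := by exact_mod_cast hb0
    have hz2 : l 2 = 0 := by exact_mod_cast hc0
    have hz3 : l 3 = 0 := by exact_mod_cast hd0
    have hz4 : l 4 = 0 := by exact_mod_cast he0
    obtain ⟨i, hi⟩ := Function.ne_iff.mp hl
    fin_cases i <;> simp only [Pi.zero_apply] at hi <;>
      [exact hi hz0; exact hi hz1; exact hi hz2; exact hi hz3; exact hi hz4]
  · -- case d ≠ 0
    set u := d * x1 - c with hu
    set v := 2 * d * x2 + b with hv
    set w := d * x3 - a with hw
    set α := d * y1 with hα
    set β := 2 * d * y2 with hβd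
    set γ := d * y3 with hγ
    have hd2 : 0 < d ^ 2 := by positivity
    have hαγ : 0 < α * γ := by
      rw [hα, hγ]; nlinarith [mul_pos hy1 hy3]
    have hβlt : β ^ 2 < 4 * (α * γ) := by
      rw [hα, hβd, hγ]; nlinarith [mul_pos hd2 hdet]
    have hcon : v * β = 2 * (u * γ + α * w) := by
      rw [hu, hv, hw, hα, hβd, hγ]; linear_combination (2 * d) * heqim
    have hD : b ^ 2 - 4 * (a * c + d * e) = (v ^ 2 - 4 * (u * w)) + (4 * (α * γ) - β ^ 2) := by
      rw [hu, hv, hw, hα, hβd, hγ]; linear_combination (-4 * d) * heqre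
    rw [hD]
    have hkey : 0 ≤ v ^ 2 - 4 * (u * w) := by
      rcases le_or_gt (u * w) 0 with h | h
      · nlinarith [sq_nonneg v]
      · rcases eq_or_ne β 0 with hβ0 | hβ0
        · rw [hβ0] at hcon
          nlinarith [sq_nonneg (u * γ - α * w)]
        · have hβpos : 0 < β ^ 2 := by positivity
          have h0 : (v * β) ^ 2 = 4 * (u * γ + α * w) ^ 2 := by rw [hcon]; ring
          have h1 : v ^ 2 * β ^ 2 ≥ 16 * (α * γ) * (u * w) := by
            nlinarith [sq_nonneg (u * γ - α * w)]
          have h2 : 0 < (4 * (α * γ) - β ^ 2) * (u * w) :=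
            mul_pos (by linarith) h
          nlinarith [h1, h2, hβpos]
    linarith
end

section
/- Let D₀ be a positive squarefree integer and Q(x, y) = Ax² + Bxy + Cy² an integral binary quadratic form with A > 0 and discriminant B² − 4AC = −16D₀, such that every integer represented by Q (i.e., every value Q(x, y) with x, y ∈ ℤ) is congruent to 0 or 1 modulo 4. Then either gcd(A, B, C) = 1 (Q is primitive), or else 4 divides each of A, B, C (so Q = 4Q′ for an integral form Q′ of discriminant −D₀) and in this case necessarily D₀ ≡ 3 (mod 4). -/
/-- Let `D₀` be a positive squarefree integer and `Q(x,y) = Ax² + Bxy + Cy²` an integral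
binary quadratic form with `A > 0` and discriminant `B² − 4AC = −16D₀`, such that every
integer represented by `Q` is congruent to `0` or `1` modulo `4`.  Then either `Q` is
primitive (`gcd(A, B, C) = 1`), or else `4` divides each of `A`, `B`, `C` (so `Q = 4Q′`
for an integral form `Q′` of discriminant `−D₀`) and in this case `D₀ ≡ 3 (mod 4)`. -/
theorem stmt2 (D₀ : ℤ) (hD₀pos : 0 < D₀) (hD₀sf : Squarefree D₀)
    (A B C : ℤ) (hA : 0 < A) (hdisc : B ^ 2 - 4 * A * C = -16 * D₀)
    (hrep : ∀ x y : ℤ,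
      (A * x ^ 2 + B * x * y + C * y ^ 2) % 4 = 0 ∨
      (A * x ^ 2 + B * x * y + C * y ^ 2) % 4 = 1) :
    Int.gcd A (Int.gcd B C) = 1 ∨
    ((4 ∣ A ∧ 4 ∣ B ∧ 4 ∣ C) ∧ D₀ % 4 = 3) := by
  by_cases hg : Int.gcd A (Int.gcd B C) = 1
  · exact Or.inl hg
  right
  -- Pick a prime factor p of the gcd.
  obtain ⟨p, hp, hpd⟩ := Nat.exists_prime_and_dvd hg
  have hpA : (p : ℤ) ∣ A :=
    dvd_trans (Int.natCast_dvd_natCast.mpr hpd) (Int.gcd_dvd_left ..)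
  have hpBC : (p : ℤ) ∣ (Int.gcd B C : ℤ) :=
    dvd_trans (Int.natCast_dvd_natCast.mpr hpd) (Int.gcd_dvd_right ..)
  have hpB : (p : ℤ) ∣ B := dvd_trans hpBC (Int.gcd_dvd_left ..)
  have hpC : (p : ℤ) ∣ C := dvd_trans hpBC (Int.gcd_dvd_right ..)
  have hp16 : ((p : ℤ)) ^ 2 ∣ 16 * D₀ := by
    have h1 : ((p : ℤ)) ^ 2 ∣ B ^ 2 - 4 * A * C :=
      dvd_sub (pow_dvd_pow_of_dvd hpB 2)
        (by
          have h2 : ((p : ℤ)) ^ 2 ∣ A * C := by rw [sq]; exact mul_dvd_mul hpA hpC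
          calc ((p : ℤ)) ^ 2 ∣ A * C := h2
            _ ∣ 4 * A * C := ⟨4, by ring⟩)
    rw [hdisc] at h1
    have h2 : ((p : ℤ)) ^ 2 ∣ -(-16 * D₀) := dvd_neg.mpr h1
    simpa using h2
  have hp2 : p = 2 := by
    by_contra hpne
    have hcop : Nat.Coprime p 2 := (Nat.coprime_primes hp Nat.prime_two).mpr hpne
    have hcop2 : Nat.Coprime (p ^ 2) 16 := by
      have : Nat.Coprime (p ^ 2) (2 ^ 4) := Nat.Coprime.pow 2 4 hcop
      simpa using this
    have hic : IsCoprime ((p : ℤ) ^ 2) 16 := by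
      rw [Int.isCoprime_iff_gcd_eq_one]
      simpa [Int.gcd, Int.natAbs_pow] using hcop2
    have hdvd : ((p : ℤ)) ^ 2 ∣ D₀ := hic.dvd_of_dvd_mul_left hp16
    have := hD₀sf (p : ℤ) (by rw [← sq]; exact hdvd)
    rw [Int.isUnit_iff] at this
    have := hp.two_le
    omega
  subst hp2
  have h2A : (2 : ℤ) ∣ A := by exact_mod_cast hpA
  have h2B : (2 : ℤ) ∣ B := by exact_mod_cast hpB
  have h2C : (2 : ℤ) ∣ C := by exact_mod_cast hpC
  have e1 : A % 4 = 0 ∨ A % 4 = 1 := by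
    have h := hrep 1 0
    rwa [show A * 1 ^ 2 + B * 1 * 0 + C * 0 ^ 2 = A from by ring] at h
  have e2 : C % 4 = 0 ∨ C % 4 = 1 := by
    have h := hrep 0 1
    rwa [show A * 0 ^ 2 + B * 0 * 1 + C * 1 ^ 2 = C from by ring] at h
  have e3 : (A + B + C) % 4 = 0 ∨ (A + B + C) % 4 = 1 := by
    have h := hrep 1 1
    rwa [show A * 1 ^ 2 + B * 1 * 1 + C * 1 ^ 2 = A + B + C from by ring] at h
  have h4A : (4 : ℤ) ∣ A := by omega
  have h4B : (4 : ℤ) ∣ B := by omega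
  have h4C : (4 : ℤ) ∣ C := by omega
  refine ⟨⟨h4A, h4B, h4C⟩, ?_⟩
  obtain ⟨a, rfl⟩ := h4A
  obtain ⟨b, rfl⟩ := h4B
  obtain ⟨c, rfl⟩ := h4C
  have hd2 : b ^ 2 - 4 * (a * c) = -D₀ := by nlinarith [hdisc]
  rcases Int.even_or_odd b with ⟨k, hk⟩ | ⟨k, hk⟩
  · exfalso
    have h4D : (2 : ℤ) * 2 ∣ D₀ := ⟨a * c - k ^ 2, by subst hk; nlinarith [hd2]⟩
    have := hD₀sf 2 h4D
    rw [Int.isUnit_iff] at this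
    omega
  · have hD : D₀ = 4 * (a * c - k ^ 2 - k) - 1 := by subst hk; nlinarith [hd2]
    omega
end

section
/- The ℤ-submodule 𝒪 = ℤe₁ + ℤe₂ + ℤe₃ + ℤe₄ of B contains 1 and is closed under multiplication (i.e., the product of any two elements of 𝒪 lies in 𝒪), and e₁, e₂, e₃, e₄ are linearly independent over ℚ; hence 𝒪 is an order of B. -/
open Quaternion

set_option maxHeartbeats 1600000

/-- Let `B = (−DN, p / ℚ)` be the quaternion algebra with `I² = −DN`, `J² = p`, `IJ = −JI`,
where `p ≡ 1 (mod 4)` is a prime with `p ∤ 2DN`, `s` is an even integer with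
`s²DN + 1 ≡ 0 (mod p)`, and `t = (s²DN + 1)/p ∈ ℤ`.  With
`e₁ = 1`, `e₂ = (1 + J)/2`, `e₃ = (I + IJ)/2`, `e₄ = (sDN·J + IJ)/p`, the ℤ-submodule
`𝒪 = ℤe₁ + ℤe₂ + ℤe₃ + ℤe₄` of `B` contains `1`, is closed under multiplication, and
`e₁, e₂, e₃, e₄` are linearly independent over `ℚ`; hence `𝒪` is an order of `B`. -/
theorem stmt3 (D N p : ℕ) (hD : 0 < D) (hN : 0 < N)
    (hp : p.Prime) (hp4 : p % 4 = 1) (hpDN : ¬ (p ∣ 2 * D * N))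
    (s t : ℤ) (hs : Even s) (ht : (p : ℤ) * t = s ^ 2 * D * N + 1)
    (e₁ e₂ e₃ e₄ : ℍ[ℚ, -((D:ℚ)*N), (p:ℚ)])
    (he₁ : e₁ = 1)
    (he₂ : e₂ = ⟨1/2, 0, 1/2, 0⟩)
    (he₃ : e₃ = ⟨0, 1/2, 0, 1/2⟩)
    (he₄ : e₄ = ⟨0, 0, (s:ℚ)*D*N/p, 1/p⟩) :
    (1 : ℍ[ℚ, -((D:ℚ)*N), (p:ℚ)]) ∈ Submodule.span ℤ ({e₁, e₂, e₃, e₄} : Set _) ∧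
    (∀ x ∈ Submodule.span ℤ ({e₁, e₂, e₃, e₄} : Set _),
      ∀ y ∈ Submodule.span ℤ ({e₁, e₂, e₃, e₄} : Set _),
        x * y ∈ Submodule.span ℤ ({e₁, e₂, e₃, e₄} : Set _)) ∧
    LinearIndependent ℚ ![e₁, e₂, e₃, e₄] := by
  obtain ⟨s', rfl⟩ : ∃ s', s = 2 * s' := ⟨hs.choose, by rw [two_mul]; exact hs.choose_spec⟩
  set m : ℕ := p / 4 with hm
  have hpm : (p : ℤ) = 4 * m + 1 := by
    have := Nat.div_add_mod p 4
    push_cast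
    omega
  have hp0 : (p : ℚ) ≠ 0 := Nat.cast_ne_zero.mpr hp.pos.ne'
  have hm0 : (4*(m:ℚ)+1) ≠ 0 := by positivity
  have hpq : (p : ℚ) = 4 * m + 1 := by exact_mod_cast congrArg (fun z : ℤ => (z : ℚ)) hpm
  have htq : (p : ℚ) * t = (2*(s':ℚ)) ^ 2 * D * N + 1 := by
    exact_mod_cast congrArg (fun z : ℤ => (z : ℚ)) ht
  have htv : (t:ℚ) = ((2*(s':ℚ))^2*D*N+1)/(4*m+1) := by
    rw [eq_div_iff hm0, mul_comm, ← hpq, htq]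
  set S := Submodule.span ℤ ({e₁, e₂, e₃, e₄} : Set (ℍ[ℚ, -((D:ℚ)*N), (p:ℚ)])) with hS
  have me1 : e₁ ∈ S := Submodule.subset_span (by simp)
  have me2 : e₂ ∈ S := Submodule.subset_span (by simp)
  have me3 : e₃ ∈ S := Submodule.subset_span (by simp)
  have me4 : e₄ ∈ S := Submodule.subset_span (by simp)
  have mem4 : ∀ n₁ n₂ n₃ n₄ : ℤ, n₁ • e₁ + n₂ • e₂ + n₃ • e₃ + n₄ • e₄ ∈ S := fun n₁ n₂ n₃ n₄ =>
    add_mem (add_mem (add_mem (S.smul_mem n₁ me1) (S.smul_mem n₂ me2)) (S.smul_mem n₃ me3))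
      (S.smul_mem n₄ me4)
  -- the nine nontrivial products
  have h22 : e₂ * e₂ = (m:ℤ) • e₁ + (1:ℤ) • e₂ + (0:ℤ) • e₃ + (0:ℤ) • e₄ := by
    subst he₁ he₂ he₃ he₄
    ext <;>
      simp only [QuaternionAlgebra.re_mul, QuaternionAlgebra.imI_mul, QuaternionAlgebra.imJ_mul,
        QuaternionAlgebra.imK_mul, QuaternionAlgebra.re_add, QuaternionAlgebra.imI_add,
        QuaternionAlgebra.imJ_add, QuaternionAlgebra.imK_add, QuaternionAlgebra.re_smul,
        QuaternionAlgebra.imI_smul, QuaternionAlgebra.imJ_smul, QuaternionAlgebra.imK_smul,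
        QuaternionAlgebra.re_one, QuaternionAlgebra.imI_one, QuaternionAlgebra.imJ_one,
        QuaternionAlgebra.imK_one] <;>
      simp only [zsmul_eq_mul] <;> push_cast <;> simp only [htv, hpq] <;> field_simp <;> ring
  have h23 : e₂ * e₃ = (2*s'*((D:ℤ)*N)*m) • e₁ + (-(4*s'*((D:ℤ)*N)*m)) • e₂ +
      (-(2*(m:ℤ))) • e₃ + ((p:ℤ)*m) • e₄ := by
    subst he₁ he₂ he₃ he₄
    ext <;>
      simp only [QuaternionAlgebra.re_mul, QuaternionAlgebra.imI_mul, QuaternionAlgebra.imJ_mul,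
        QuaternionAlgebra.imK_mul, QuaternionAlgebra.re_add, QuaternionAlgebra.imI_add,
        QuaternionAlgebra.imJ_add, QuaternionAlgebra.imK_add, QuaternionAlgebra.re_smul,
        QuaternionAlgebra.imI_smul, QuaternionAlgebra.imJ_smul, QuaternionAlgebra.imK_smul,
        QuaternionAlgebra.re_one, QuaternionAlgebra.imI_one, QuaternionAlgebra.imJ_one,
        QuaternionAlgebra.imK_one] <;>
      simp only [zsmul_eq_mul] <;> push_cast <;> simp only [htv, hpq] <;> field_simp <;> ring
  have h32 : e₃ * e₂ = (-(2*s'*((D:ℤ)*N)*m)) • e₁ + (4*s'*((D:ℤ)*N)*m) • e₂ +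
      (2*(m:ℤ)+1) • e₃ + (-((p:ℤ)*m)) • e₄ := by
    subst he₁ he₂ he₃ he₄
    ext <;>
      simp only [QuaternionAlgebra.re_mul, QuaternionAlgebra.imI_mul, QuaternionAlgebra.imJ_mul,
        QuaternionAlgebra.imK_mul, QuaternionAlgebra.re_add, QuaternionAlgebra.imI_add,
        QuaternionAlgebra.imJ_add, QuaternionAlgebra.imK_add, QuaternionAlgebra.re_smul,
        QuaternionAlgebra.imI_smul, QuaternionAlgebra.imJ_smul, QuaternionAlgebra.imK_smul,
        QuaternionAlgebra.re_one, QuaternionAlgebra.imI_one, QuaternionAlgebra.imJ_one,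
        QuaternionAlgebra.imK_one] <;>
      simp only [zsmul_eq_mul] <;> push_cast <;> simp only [htv, hpq] <;> field_simp <;> ring
  have h24 : e₂ * e₄ = (2*s'*((D:ℤ)*N)) • e₁ + (-(2*s'*((D:ℤ)*N))) • e₂ +
      (-1 : ℤ) • e₃ + (2*(m:ℤ)+1) • e₄ := by
    subst he₁ he₂ he₃ he₄
    ext <;>
      simp only [QuaternionAlgebra.re_mul, QuaternionAlgebra.imI_mul, QuaternionAlgebra.imJ_mul,
        QuaternionAlgebra.imK_mul, QuaternionAlgebra.re_add, QuaternionAlgebra.imI_add,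
        QuaternionAlgebra.imJ_add, QuaternionAlgebra.imK_add, QuaternionAlgebra.re_smul,
        QuaternionAlgebra.imI_smul, QuaternionAlgebra.imJ_smul, QuaternionAlgebra.imK_smul,
        QuaternionAlgebra.re_one, QuaternionAlgebra.imI_one, QuaternionAlgebra.imJ_one,
        QuaternionAlgebra.imK_one] <;>
      simp only [zsmul_eq_mul] <;> push_cast <;> simp only [htv, hpq] <;> field_simp <;> ring
  have h42 : e₄ * e₂ = (0:ℤ) • e₁ + (2*s'*((D:ℤ)*N)) • e₂ + (1:ℤ) • e₃ + (-(2*(m:ℤ))) • e₄ := by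
    subst he₁ he₂ he₃ he₄
    ext <;>
      simp only [QuaternionAlgebra.re_mul, QuaternionAlgebra.imI_mul, QuaternionAlgebra.imJ_mul,
        QuaternionAlgebra.imK_mul, QuaternionAlgebra.re_add, QuaternionAlgebra.imI_add,
        QuaternionAlgebra.imJ_add, QuaternionAlgebra.imK_add, QuaternionAlgebra.re_smul,
        QuaternionAlgebra.imI_smul, QuaternionAlgebra.imJ_smul, QuaternionAlgebra.imK_smul,
        QuaternionAlgebra.re_one, QuaternionAlgebra.imI_one, QuaternionAlgebra.imJ_one,
        QuaternionAlgebra.imK_one] <;>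
      simp only [zsmul_eq_mul] <;> push_cast <;> simp only [htv, hpq] <;> field_simp <;> ring
  have h33 : e₃ * e₃ = (((D:ℤ)*N)*m) • e₁ + (0:ℤ) • e₂ + (0:ℤ) • e₃ + (0:ℤ) • e₄ := by
    subst he₁ he₂ he₃ he₄
    ext <;>
      simp only [QuaternionAlgebra.re_mul, QuaternionAlgebra.imI_mul, QuaternionAlgebra.imJ_mul,
        QuaternionAlgebra.imK_mul, QuaternionAlgebra.re_add, QuaternionAlgebra.imI_add,
        QuaternionAlgebra.imJ_add, QuaternionAlgebra.imK_add, QuaternionAlgebra.re_smul,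
        QuaternionAlgebra.imI_smul, QuaternionAlgebra.imJ_smul, QuaternionAlgebra.imK_smul,
        QuaternionAlgebra.re_one, QuaternionAlgebra.imI_one, QuaternionAlgebra.imJ_one,
        QuaternionAlgebra.imK_one] <;>
      simp only [zsmul_eq_mul] <;> push_cast <;> simp only [htv, hpq] <;> field_simp <;> ring
  have h34 : e₃ * e₄ = (((D:ℤ)*N) - 2*((D:ℤ)*N)*t*m) • e₁ +
      (((D:ℤ)*N)*(4*s'^2*((D:ℤ)*N) - t)) • e₂ + (2*s'*((D:ℤ)*N)) • e₃ +
      (-(4*s'*((D:ℤ)*N)*m)) • e₄ := by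
    subst he₁ he₂ he₃ he₄
    ext <;>
      simp only [QuaternionAlgebra.re_mul, QuaternionAlgebra.imI_mul, QuaternionAlgebra.imJ_mul,
        QuaternionAlgebra.imK_mul, QuaternionAlgebra.re_add, QuaternionAlgebra.imI_add,
        QuaternionAlgebra.imJ_add, QuaternionAlgebra.imK_add, QuaternionAlgebra.re_smul,
        QuaternionAlgebra.imI_smul, QuaternionAlgebra.imJ_smul, QuaternionAlgebra.imK_smul,
        QuaternionAlgebra.re_one, QuaternionAlgebra.imI_one, QuaternionAlgebra.imJ_one,
        QuaternionAlgebra.imK_one] <;>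
      simp only [zsmul_eq_mul] <;> push_cast <;> simp only [htv, hpq] <;> field_simp <;> ring
  have h43 : e₄ * e₃ = (2*((D:ℤ)*N)*t*m) • e₁ + (((D:ℤ)*N)*(t - 4*s'^2*((D:ℤ)*N))) • e₂ +
      (-(2*s'*((D:ℤ)*N))) • e₃ + (4*s'*((D:ℤ)*N)*m) • e₄ := by
    subst he₁ he₂ he₃ he₄
    ext <;>
      simp only [QuaternionAlgebra.re_mul, QuaternionAlgebra.imI_mul, QuaternionAlgebra.imJ_mul,
        QuaternionAlgebra.imK_mul, QuaternionAlgebra.re_add, QuaternionAlgebra.imI_add,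
        QuaternionAlgebra.imJ_add, QuaternionAlgebra.imK_add, QuaternionAlgebra.re_smul,
        QuaternionAlgebra.imI_smul, QuaternionAlgebra.imJ_smul, QuaternionAlgebra.imK_smul,
        QuaternionAlgebra.re_one, QuaternionAlgebra.imI_one, QuaternionAlgebra.imJ_one,
        QuaternionAlgebra.imK_one] <;>
      simp only [zsmul_eq_mul] <;> push_cast <;> simp only [htv, hpq] <;> field_simp <;> ring
  have h44 : e₄ * e₄ = (((D:ℤ)*N)*t) • e₁ + (0:ℤ) • e₂ + (0:ℤ) • e₃ + (0:ℤ) • e₄ := by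
    subst he₁ he₂ he₃ he₄
    ext <;>
      simp only [QuaternionAlgebra.re_mul, QuaternionAlgebra.imI_mul, QuaternionAlgebra.imJ_mul,
        QuaternionAlgebra.imK_mul, QuaternionAlgebra.re_add, QuaternionAlgebra.imI_add,
        QuaternionAlgebra.imJ_add, QuaternionAlgebra.imK_add, QuaternionAlgebra.re_smul,
        QuaternionAlgebra.imI_smul, QuaternionAlgebra.imJ_smul, QuaternionAlgebra.imK_smul,
        QuaternionAlgebra.re_one, QuaternionAlgebra.imI_one, QuaternionAlgebra.imJ_one,
        QuaternionAlgebra.imK_one] <;>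
      simp only [zsmul_eq_mul] <;> push_cast <;> simp only [htv, hpq] <;> field_simp <;> ring
  have gen_mul : ∀ a ∈ ({e₁, e₂, e₃, e₄} : Set (ℍ[ℚ, -((D:ℚ)*N), (p:ℚ)])),
      ∀ b ∈ ({e₁, e₂, e₃, e₄} : Set (ℍ[ℚ, -((D:ℚ)*N), (p:ℚ)])), a * b ∈ S := by
    intro a ha b hb
    simp only [Set.mem_insert_iff, Set.mem_singleton_iff] at ha hb
    rcases ha with h | h | h | h <;> rcases hb with h' | h' | h' | h' <;> rw [h, h']
    · rw [he₁, one_mul, ← he₁]; exact me1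
    · rw [he₁, one_mul]; exact me2
    · rw [he₁, one_mul]; exact me3
    · rw [he₁, one_mul]; exact me4
    · rw [he₁, mul_one]; exact me2
    · rw [h22]; exact mem4 _ _ _ _
    · rw [h23]; exact mem4 _ _ _ _
    · rw [h24]; exact mem4 _ _ _ _
    · rw [he₁, mul_one]; exact me3
    · rw [h32]; exact mem4 _ _ _ _
    · rw [h33]; exact mem4 _ _ _ _
    · rw [h34]; exact mem4 _ _ _ _
    · rw [he₁, mul_one]; exact me4
    · rw [h42]; exact mem4 _ _ _ _
    · rw [h43]; exact mem4 _ _ _ _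
    · rw [h44]; exact mem4 _ _ _ _
  refine ⟨he₁ ▸ me1, ?_, ?_⟩
  · intro x hx
    induction hx using Submodule.span_induction with
    | mem a ha =>
      intro y hy
      induction hy using Submodule.span_induction with
      | mem b hb => exact gen_mul a ha b hb
      | zero => rw [mul_zero]; exact S.zero_mem
      | add b c _ _ ihb ihc => rw [mul_add]; exact add_mem ihb ihc
      | smul n b _ ihb => rw [mul_smul_comm]; exact S.smul_mem n ihb
    | zero => intro y hy; rw [zero_mul]; exact S.zero_mem
    | add a b _ _ iha ihb =>
      intro y hy; rw [add_mul]; exact add_mem (iha y hy) (ihb y hy)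
    | smul n a _ iha =>
      intro y hy; rw [smul_mul_assoc]; exact S.smul_mem n (iha y hy)
  · rw [Fintype.linearIndependent_iff]
    intro g hg
    rw [Fin.sum_univ_four] at hg
    simp only [Matrix.cons_val_zero, Matrix.cons_val_one, Matrix.head_cons, Matrix.cons_val_two,
      Matrix.tail_cons, Matrix.cons_val_three] at hg
    subst he₁ he₂ he₃ he₄
    rw [QuaternionAlgebra.ext_iff] at hg
    obtain ⟨h1, h2, h3, h4⟩ := hg
    simp only [QuaternionAlgebra.re_add, QuaternionAlgebra.imI_add, QuaternionAlgebra.imJ_add,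
      QuaternionAlgebra.imK_add, QuaternionAlgebra.re_smul, QuaternionAlgebra.imI_smul,
      QuaternionAlgebra.imJ_smul, QuaternionAlgebra.imK_smul, QuaternionAlgebra.re_one,
      QuaternionAlgebra.imI_one, QuaternionAlgebra.imJ_one, QuaternionAlgebra.imK_one,
      QuaternionAlgebra.re_zero, QuaternionAlgebra.imI_zero, QuaternionAlgebra.imJ_zero,
      QuaternionAlgebra.imK_zero, smul_eq_mul] at h1 h2 h3 h4
    have hg2 : g 2 = 0 := by linarith
    have hg3 : g 3 = 0 := by
      rw [hg2] at h4
      field_simp at h4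
      linarith
    have hg1 : g 1 = 0 := by
      rw [hg3] at h3
      linarith
    have hg0 : g 0 = 0 := by
      rw [hg1] at h1
      linarith
    intro i
    fin_cases i
    · exact hg0
    · exact hg1
    · exact hg2
    · exact hg3
end

section
/- Let 𝒪 = ℤe₁ + ℤe₂ + ℤe₃ + ℤe₄ ⊂ B. With μ = I, the set μ^⊥ = {β ∈ 𝒪 : tr(β·μ̄) = 0} equals ℤ·1 + ℤe₂ + ℤe₄, and for all integers x, y one has tr(xe₂ + ye₄)² − 4·nr(xe₂ + ye₄) = p x² + 4sDN xy + 4tDN y². In particular the quadratic form Q_μ(x, y) = disc(xe₂ + ye₄) equals px² + 4sDNxy + 4tDNy². -/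
open Quaternion

/-- The reduced trace `tr(α) = α + ᾱ = 2·re(α)` on `B = (−DN, p / ℚ)`. -/
def qtr {a b : ℚ} (α : ℍ[ℚ, a, b]) : ℚ := 2 * α.re

/-- The reduced norm `nr(α) = αᾱ = x² + DNy² − pz² − DNpw²` on `B = (−DN, p / ℚ)`,
for `α = x + yI + zJ + wIJ`. -/
def qnr (D N p : ℕ) (α : ℍ[ℚ, -((D:ℚ)*N), (p:ℚ)]) : ℚ :=
  α.re ^ 2 + (D:ℚ) * N * α.imI ^ 2 - (p:ℚ) * α.imJ ^ 2 - (D:ℚ) * N * p * α.imK ^ 2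

/-- In the primitive case (`p ≡ 1 (mod 4)` prime, `p ∤ 2DN`, `s` even,
`pt = s²DN + 1`), with `𝒪 = ℤe₁ + ℤe₂ + ℤe₃ + ℤe₄` and `μ = I`, the set
`μ^⊥ = {β ∈ 𝒪 : tr(βμ̄) = 0}` equals `ℤ·1 + ℤe₂ + ℤe₄`, and for all integers `x, y` one has
`tr(xe₂ + ye₄)² − 4·nr(xe₂ + ye₄) = px² + 4sDNxy + 4tDNy²`; in particular the quadratic
form `Q_μ(x, y) = disc(xe₂ + ye₄)` equals `px² + 4sDNxy + 4tDNy²`. -/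
theorem stmt4 (D N p : ℕ) (hD : 0 < D) (hN : 0 < N)
    (hp : p.Prime) (hp4 : p % 4 = 1) (hpDN : ¬ (p ∣ 2 * D * N))
    (s t : ℤ) (hs : Even s) (ht : (p : ℤ) * t = s ^ 2 * D * N + 1)
    (e₁ e₂ e₃ e₄ μ : ℍ[ℚ, -((D:ℚ)*N), (p:ℚ)])
    (he₁ : e₁ = 1)
    (he₂ : e₂ = ⟨1/2, 0, 1/2, 0⟩)
    (he₃ : e₃ = ⟨0, 1/2, 0, 1/2⟩)
    (he₄ : e₄ = ⟨0, 0, (s:ℚ)*D*N/p, 1/p⟩)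
    (hμ : μ = ⟨0, 1, 0, 0⟩) :
    {β : ℍ[ℚ, -((D:ℚ)*N), (p:ℚ)] |
        β ∈ Submodule.span ℤ ({e₁, e₂, e₃, e₄} : Set _) ∧ qtr (β * star μ) = 0}
      = (Submodule.span ℤ ({1, e₂, e₄} : Set (ℍ[ℚ, -((D:ℚ)*N), (p:ℚ)])) : Set _) ∧
    ∀ x y : ℤ, qtr (x • e₂ + y • e₄) ^ 2 - 4 * qnr D N p (x • e₂ + y • e₄)
      = (p:ℚ) * x ^ 2 + 4 * s * D * N * (x * y) + 4 * t * D * N * y ^ 2 := by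
  have hp0 : (p:ℚ) ≠ 0 := Nat.cast_ne_zero.mpr hp.pos.ne'
  have hDN : ((D:ℚ)*N) ≠ 0 :=
    mul_ne_zero (Nat.cast_ne_zero.mpr hD.ne') (Nat.cast_ne_zero.mpr hN.ne')
  have ht' : (p:ℚ) * t = (s:ℚ)^2 * D * N + 1 := by exact_mod_cast congrArg (Int.cast : ℤ → ℚ) ht
  have key : ∀ β : ℍ[ℚ, -((D:ℚ)*N), (p:ℚ)], qtr (β * star μ) = 2 * ((D:ℚ)*N) * β.imI := by
    intro β
    simp [qtr, hμ, QuaternionAlgebra.re_mul]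
    ring
  constructor
  · ext β
    simp only [Set.mem_setOf_eq, SetLike.mem_coe]
    constructor
    · rintro ⟨hmem, htr⟩
      rw [Submodule.mem_span_insert] at hmem
      obtain ⟨a, z, hz, rfl⟩ := hmem
      rw [Submodule.mem_span_insert] at hz
      obtain ⟨b, z2, hz2, rfl⟩ := hz
      rw [Submodule.mem_span_insert] at hz2
      obtain ⟨c, z3, hz3, rfl⟩ := hz2
      rw [Submodule.mem_span_singleton] at hz3
      obtain ⟨d, rfl⟩ := hz3
      rw [key] at htr
      have himI : (a • e₁ + (b • e₂ + (c • e₃ + d • e₄))).imI = (c:ℚ)/2 := by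
        simp [he₁, he₂, he₃, he₄, QuaternionAlgebra.imI_add, QuaternionAlgebra.imI_smul,
          zsmul_eq_mul]
        ring
      rw [himI] at htr
      have hc : c = 0 := by
        have hc' : ((D:ℚ)*N) * c = 0 := by linear_combination htr
        have : (c:ℚ) = 0 := by
          rcases mul_eq_zero.mp hc' with h | h
          · exact absurd h hDN
          · exact h
        exact_mod_cast this
      subst hc
      rw [zero_smul, zero_add, he₁]
      refine Submodule.add_mem _ (Submodule.smul_mem _ _ (Submodule.subset_span ?_))
        (Submodule.add_mem _ (Submodule.smul_mem _ _ (Submodule.subset_span ?_))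
          (Submodule.smul_mem _ _ (Submodule.subset_span ?_))) <;> simp
    · intro h
      constructor
      · refine Submodule.span_mono ?_ h
        rw [he₁]
        intro x hx
        simp only [Set.mem_insert_iff, Set.mem_singleton_iff] at hx ⊢
        tauto
      · rw [Submodule.mem_span_insert] at h
        obtain ⟨a, z, hz, rfl⟩ := h
        rw [Submodule.mem_span_insert] at hz
        obtain ⟨b, z2, hz2, rfl⟩ := hz
        rw [Submodule.mem_span_singleton] at hz2
        obtain ⟨d, rfl⟩ := hz2
        rw [key]
        simp [he₂, he₄, QuaternionAlgebra.imI_add, QuaternionAlgebra.imI_smul]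
  · intro x y
    simp only [qtr, qnr, he₂, he₄, QuaternionAlgebra.re_add, QuaternionAlgebra.imI_add,
      QuaternionAlgebra.imJ_add, QuaternionAlgebra.imK_add, QuaternionAlgebra.re_smul,
      QuaternionAlgebra.imI_smul, QuaternionAlgebra.imJ_smul, QuaternionAlgebra.imK_smul,
      zsmul_eq_mul, QuaternionAlgebra.re_mul, QuaternionAlgebra.imI_mul,
      QuaternionAlgebra.imJ_mul, QuaternionAlgebra.imK_mul, QuaternionAlgebra.re_intCast,
      QuaternionAlgebra.imI_intCast, QuaternionAlgebra.imJ_intCast, QuaternionAlgebra.imK_intCast]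
    field_simp
    linear_combination (-16 * (y:ℚ)^2 * D * N) * ht'
end

section
/- The ℤ-submodule 𝒪 = ℤe₁ + ℤe₂ + ℤe₃ + ℤe₄ of B contains 1 and is closed under multiplication (i.e., the product of any two elements of 𝒪 lies in 𝒪), and e₁, e₂, e₃, e₄ are linearly independent over ℚ; hence 𝒪 is an order of B. -/
open Quaternion

set_option maxHeartbeats 1600000 in
/-- Let `B = (−DN, p / ℚ)` be the quaternion algebra with `I² = −DN`, `J² = p`, `IJ = −JI`,
where `DN ≡ 3 (mod 4)`, `p` is an odd prime with `p ∤ DN`, `s` is an odd integer with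
`s²DN + 1 ≡ 0 (mod 4p)`, and `t = (s²DN + 1)/(4p) ∈ ℤ`.  With
`e₁ = 1`, `e₂ = (1 + I)/2`, `e₃ = J`, `e₄ = (sDN·J + IJ)/(2p)`, the ℤ-submodule
`𝒪 = ℤe₁ + ℤe₂ + ℤe₃ + ℤe₄` of `B` contains `1`, is closed under multiplication, and
`e₁, e₂, e₃, e₄` are linearly independent over `ℚ`; hence `𝒪` is an order of `B`. -/
theorem stmt5 (D N p : ℕ) (hD : 0 < D) (hN : 0 < N)
    (hDN4 : (D * N) % 4 = 3) (hp : p.Prime) (hpodd : p ≠ 2) (hpDN : ¬ (p ∣ D * N))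
    (s t : ℤ) (hs : Odd s) (ht : 4 * (p : ℤ) * t = s ^ 2 * D * N + 1)
    (e₁ e₂ e₃ e₄ : ℍ[ℚ, -((D:ℚ)*N), (p:ℚ)])
    (he₁ : e₁ = 1)
    (he₂ : e₂ = ⟨1/2, 1/2, 0, 0⟩)
    (he₃ : e₃ = ⟨0, 0, 1, 0⟩)
    (he₄ : e₄ = ⟨0, 0, (s:ℚ)*D*N/(2*p), 1/(2*p)⟩) :
    (1 : ℍ[ℚ, -((D:ℚ)*N), (p:ℚ)]) ∈ Submodule.span ℤ ({e₁, e₂, e₃, e₄} : Set _) ∧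
    (∀ x ∈ Submodule.span ℤ ({e₁, e₂, e₃, e₄} : Set _),
      ∀ y ∈ Submodule.span ℤ ({e₁, e₂, e₃, e₄} : Set _),
        x * y ∈ Submodule.span ℤ ({e₁, e₂, e₃, e₄} : Set _)) ∧
    LinearIndependent ℚ ![e₁, e₂, e₃, e₄] := by
  have hp0 : (p:ℚ) ≠ 0 := Nat.cast_ne_zero.mpr hp.pos.ne'
  have hdn4 : ((D:ℤ) * N) % 4 = 3 := by exact_mod_cast hDN4
  obtain ⟨q, hq⟩ : ∃ q : ℤ, (D:ℤ)*N + 1 = 4*q := ⟨((D:ℤ)*N+1)/4, by omega⟩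
  have hdnodd : Odd ((D:ℤ)*N) := ⟨((D:ℤ)*N - 1)/2, by omega⟩
  obtain ⟨u, hu⟩ : ∃ u : ℤ, s * ((D:ℤ)*N) = 2*u + 1 := hs.mul hdnodd
  have hqQ : (D:ℚ)*N + 1 = 4*q := by exact_mod_cast hq
  have huQ : (s:ℚ) * ((D:ℚ)*N) = 2*u + 1 := by exact_mod_cast hu
  have htQ : 4 * (p:ℚ) * t = (s:ℚ)^2 * D * N + 1 := by exact_mod_cast ht
  have m1 : e₁ ∈ Submodule.span ℤ ({e₁, e₂, e₃, e₄} : Set _) :=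
    Submodule.subset_span (by simp)
  have m2 : e₂ ∈ Submodule.span ℤ ({e₁, e₂, e₃, e₄} : Set _) :=
    Submodule.subset_span (by simp)
  have m3 : e₃ ∈ Submodule.span ℤ ({e₁, e₂, e₃, e₄} : Set _) :=
    Submodule.subset_span (by simp)
  have m4 : e₄ ∈ Submodule.span ℤ ({e₁, e₂, e₃, e₄} : Set _) :=
    Submodule.subset_span (by simp)
  have h22 : e₂ * e₂ = (-q) • e₁ + e₂ := by
    rw [he₁, he₂]
    refine QuaternionAlgebra.ext ?_ ?_ ?_ ?_ <;>
      simp only [QuaternionAlgebra.re_mul, QuaternionAlgebra.imI_mul, QuaternionAlgebra.imJ_mul,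
        QuaternionAlgebra.imK_mul, QuaternionAlgebra.re_add, QuaternionAlgebra.imI_add,
        QuaternionAlgebra.imJ_add, QuaternionAlgebra.imK_add, QuaternionAlgebra.re_smul,
        QuaternionAlgebra.imI_smul, QuaternionAlgebra.imJ_smul, QuaternionAlgebra.imK_smul,
        QuaternionAlgebra.re_one, QuaternionAlgebra.imI_one, QuaternionAlgebra.imJ_one,
        QuaternionAlgebra.imK_one, zsmul_eq_mul, QuaternionAlgebra.re_intCast,
        QuaternionAlgebra.imI_intCast, QuaternionAlgebra.imJ_intCast, QuaternionAlgebra.imK_intCast] <;>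
      push_cast <;> field_simp
    all_goals first
      | ring1
      | linear_combination (2:ℚ) * hqQ
      | linear_combination (-2:ℚ) * hqQ
      | linear_combination (-1:ℚ) * hqQ
  have h23 : e₂ * e₃ = (-u) • e₃ + (p:ℤ) • e₄ := by
    rw [he₂, he₃, he₄]
    refine QuaternionAlgebra.ext ?_ ?_ ?_ ?_ <;>
      simp only [QuaternionAlgebra.re_mul, QuaternionAlgebra.imI_mul, QuaternionAlgebra.imJ_mul,
        QuaternionAlgebra.imK_mul, QuaternionAlgebra.re_add, QuaternionAlgebra.imI_add,
        QuaternionAlgebra.imJ_add, QuaternionAlgebra.imK_add, QuaternionAlgebra.re_smul,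
        QuaternionAlgebra.imI_smul, QuaternionAlgebra.imJ_smul, QuaternionAlgebra.imK_smul,
        QuaternionAlgebra.re_one, QuaternionAlgebra.imI_one, QuaternionAlgebra.imJ_one,
        QuaternionAlgebra.imK_one, zsmul_eq_mul, QuaternionAlgebra.re_intCast,
        QuaternionAlgebra.imI_intCast, QuaternionAlgebra.imJ_intCast, QuaternionAlgebra.imK_intCast] <;>
      push_cast <;> field_simp
    all_goals first
      | ring1
      | linear_combination (-(p:ℚ)) * huQ
  have h32 : e₃ * e₂ = (u+1) • e₃ + (-(p:ℤ)) • e₄ := by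
    rw [he₂, he₃, he₄]
    refine QuaternionAlgebra.ext ?_ ?_ ?_ ?_ <;>
      simp only [QuaternionAlgebra.re_mul, QuaternionAlgebra.imI_mul, QuaternionAlgebra.imJ_mul,
        QuaternionAlgebra.imK_mul, QuaternionAlgebra.re_add, QuaternionAlgebra.imI_add,
        QuaternionAlgebra.imJ_add, QuaternionAlgebra.imK_add, QuaternionAlgebra.re_smul,
        QuaternionAlgebra.imI_smul, QuaternionAlgebra.imJ_smul, QuaternionAlgebra.imK_smul,
        QuaternionAlgebra.re_one, QuaternionAlgebra.imI_one, QuaternionAlgebra.imJ_one,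
        QuaternionAlgebra.imK_one, zsmul_eq_mul, QuaternionAlgebra.re_intCast,
        QuaternionAlgebra.imI_intCast, QuaternionAlgebra.imJ_intCast, QuaternionAlgebra.imK_intCast] <;>
      push_cast <;> field_simp
    all_goals first
      | ring1
      | linear_combination ((p:ℚ)) * huQ
      | linear_combination (-(p:ℚ)) * huQ
  have h24 : e₂ * e₄ = (-((D:ℤ)*N*t)) • e₃ + (u+1) • e₄ := by
    rw [he₂, he₃, he₄]
    refine QuaternionAlgebra.ext ?_ ?_ ?_ ?_ <;>
      simp only [QuaternionAlgebra.re_mul, QuaternionAlgebra.imI_mul, QuaternionAlgebra.imJ_mul,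
        QuaternionAlgebra.imK_mul, QuaternionAlgebra.re_add, QuaternionAlgebra.imI_add,
        QuaternionAlgebra.imJ_add, QuaternionAlgebra.imK_add, QuaternionAlgebra.re_smul,
        QuaternionAlgebra.imI_smul, QuaternionAlgebra.imJ_smul, QuaternionAlgebra.imK_smul,
        QuaternionAlgebra.re_one, QuaternionAlgebra.imI_one, QuaternionAlgebra.imJ_one,
        QuaternionAlgebra.imK_one, zsmul_eq_mul, QuaternionAlgebra.re_intCast,
        QuaternionAlgebra.imI_intCast, QuaternionAlgebra.imJ_intCast, QuaternionAlgebra.imK_intCast] <;>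
      push_cast <;> field_simp
    all_goals try linear_combination (2*(p:ℚ)*D*N) * htQ + (2*(p:ℚ)*s*D*N) * huQ
    all_goals first
      | ring1
      | linear_combination huQ
      | linear_combination ((D:ℚ)*N) * htQ + ((s:ℚ)*D*N) * huQ
  have h42 : e₄ * e₂ = ((D:ℤ)*N*t) • e₃ + (-u) • e₄ := by
    rw [he₂, he₃, he₄]
    refine QuaternionAlgebra.ext ?_ ?_ ?_ ?_ <;>
      simp only [QuaternionAlgebra.re_mul, QuaternionAlgebra.imI_mul, QuaternionAlgebra.imJ_mul,
        QuaternionAlgebra.imK_mul, QuaternionAlgebra.re_add, QuaternionAlgebra.imI_add,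
        QuaternionAlgebra.imJ_add, QuaternionAlgebra.imK_add, QuaternionAlgebra.re_smul,
        QuaternionAlgebra.imI_smul, QuaternionAlgebra.imJ_smul, QuaternionAlgebra.imK_smul,
        QuaternionAlgebra.re_one, QuaternionAlgebra.imI_one, QuaternionAlgebra.imJ_one,
        QuaternionAlgebra.imK_one, zsmul_eq_mul, QuaternionAlgebra.re_intCast,
        QuaternionAlgebra.imI_intCast, QuaternionAlgebra.imJ_intCast, QuaternionAlgebra.imK_intCast] <;>
      push_cast <;> field_simp
    all_goals first
      | ring1
      | linear_combination ((p:ℚ)) * huQ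
      | linear_combination (-(p:ℚ)) * huQ
      | linear_combination (2*(p:ℚ)) * huQ
      | linear_combination (-(2*(p:ℚ))) * huQ
      | linear_combination (8*(p:ℚ)^2) * huQ
      | linear_combination (-(8*(p:ℚ)^2)) * huQ
      | linear_combination ((p:ℚ)*D*N) * htQ
      | linear_combination (-((p:ℚ)*D*N)) * htQ
      | linear_combination (2*(p:ℚ)*s*D*N) * huQ + (2*(p:ℚ)*D*N) * htQ
      | linear_combination (-(2*(p:ℚ)*s*D*N)) * huQ + (-(2*(p:ℚ)*D*N)) * htQ
      | linear_combination (-((D:ℚ)*N)) * htQ + (-((s:ℚ)*D*N)) * huQ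
      | linear_combination (-1:ℚ) * huQ
  have h33 : e₃ * e₃ = (p:ℤ) • e₁ := by
    rw [he₁, he₃]
    refine QuaternionAlgebra.ext ?_ ?_ ?_ ?_ <;>
      simp only [QuaternionAlgebra.re_mul, QuaternionAlgebra.imI_mul, QuaternionAlgebra.imJ_mul,
        QuaternionAlgebra.imK_mul, QuaternionAlgebra.re_add, QuaternionAlgebra.imI_add,
        QuaternionAlgebra.imJ_add, QuaternionAlgebra.imK_add, QuaternionAlgebra.re_smul,
        QuaternionAlgebra.imI_smul, QuaternionAlgebra.imJ_smul, QuaternionAlgebra.imK_smul,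
        QuaternionAlgebra.re_one, QuaternionAlgebra.imI_one, QuaternionAlgebra.imJ_one,
        QuaternionAlgebra.imK_one, zsmul_eq_mul, QuaternionAlgebra.re_intCast,
        QuaternionAlgebra.imI_intCast, QuaternionAlgebra.imJ_intCast, QuaternionAlgebra.imK_intCast] <;>
      push_cast <;> field_simp
    all_goals first
      | ring1
      | linear_combination ((p:ℚ)) * huQ
      | linear_combination (-(p:ℚ)) * huQ
      | linear_combination (2*(p:ℚ)) * huQ
      | linear_combination (-(2*(p:ℚ))) * huQ
      | linear_combination (8*(p:ℚ)^2) * huQ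
      | linear_combination (-(8*(p:ℚ)^2)) * huQ
      | linear_combination ((p:ℚ)*D*N) * htQ
      | linear_combination (-((p:ℚ)*D*N)) * htQ
      | linear_combination (2*(p:ℚ)*s*D*N) * huQ + (2*(p:ℚ)*D*N) * htQ
      | linear_combination (-(2*(p:ℚ)*s*D*N)) * huQ + (-(2*(p:ℚ)*D*N)) * htQ
  have h34 : e₃ * e₄ = (u+1) • e₁ + (-1:ℤ) • e₂ := by
    rw [he₁, he₂, he₃, he₄]
    refine QuaternionAlgebra.ext ?_ ?_ ?_ ?_ <;>
      simp only [QuaternionAlgebra.re_mul, QuaternionAlgebra.imI_mul, QuaternionAlgebra.imJ_mul,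
        QuaternionAlgebra.imK_mul, QuaternionAlgebra.re_add, QuaternionAlgebra.imI_add,
        QuaternionAlgebra.imJ_add, QuaternionAlgebra.imK_add, QuaternionAlgebra.re_smul,
        QuaternionAlgebra.imI_smul, QuaternionAlgebra.imJ_smul, QuaternionAlgebra.imK_smul,
        QuaternionAlgebra.re_one, QuaternionAlgebra.imI_one, QuaternionAlgebra.imJ_one,
        QuaternionAlgebra.imK_one, zsmul_eq_mul, QuaternionAlgebra.re_intCast,
        QuaternionAlgebra.imI_intCast, QuaternionAlgebra.imJ_intCast, QuaternionAlgebra.imK_intCast] <;>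
      push_cast <;> field_simp
    all_goals first
      | ring1
      | linear_combination ((p:ℚ)) * huQ
      | linear_combination (-(p:ℚ)) * huQ
      | linear_combination (2*(p:ℚ)) * huQ
      | linear_combination (-(2*(p:ℚ))) * huQ
      | linear_combination (8*(p:ℚ)^2) * huQ
      | linear_combination (-(8*(p:ℚ)^2)) * huQ
      | linear_combination ((p:ℚ)*D*N) * htQ
      | linear_combination (-((p:ℚ)*D*N)) * htQ
      | linear_combination (2*(p:ℚ)*s*D*N) * huQ + (2*(p:ℚ)*D*N) * htQ
      | linear_combination (-(2*(p:ℚ)*s*D*N)) * huQ + (-(2*(p:ℚ)*D*N)) * htQ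
      | linear_combination huQ
  have h43 : e₄ * e₃ = u • e₁ + e₂ := by
    rw [he₁, he₂, he₃, he₄]
    refine QuaternionAlgebra.ext ?_ ?_ ?_ ?_ <;>
      simp only [QuaternionAlgebra.re_mul, QuaternionAlgebra.imI_mul, QuaternionAlgebra.imJ_mul,
        QuaternionAlgebra.imK_mul, QuaternionAlgebra.re_add, QuaternionAlgebra.imI_add,
        QuaternionAlgebra.imJ_add, QuaternionAlgebra.imK_add, QuaternionAlgebra.re_smul,
        QuaternionAlgebra.imI_smul, QuaternionAlgebra.imJ_smul, QuaternionAlgebra.imK_smul,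
        QuaternionAlgebra.re_one, QuaternionAlgebra.imI_one, QuaternionAlgebra.imJ_one,
        QuaternionAlgebra.imK_one, zsmul_eq_mul, QuaternionAlgebra.re_intCast,
        QuaternionAlgebra.imI_intCast, QuaternionAlgebra.imJ_intCast, QuaternionAlgebra.imK_intCast] <;>
      push_cast <;> field_simp
    all_goals first
      | ring1
      | linear_combination ((p:ℚ)) * huQ
      | linear_combination (-(p:ℚ)) * huQ
      | linear_combination (2*(p:ℚ)) * huQ
      | linear_combination (-(2*(p:ℚ))) * huQ
      | linear_combination (8*(p:ℚ)^2) * huQ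
      | linear_combination (-(8*(p:ℚ)^2)) * huQ
      | linear_combination ((p:ℚ)*D*N) * htQ
      | linear_combination (-((p:ℚ)*D*N)) * htQ
      | linear_combination (2*(p:ℚ)*s*D*N) * huQ + (2*(p:ℚ)*D*N) * htQ
      | linear_combination (-(2*(p:ℚ)*s*D*N)) * huQ + (-(2*(p:ℚ)*D*N)) * htQ
      | linear_combination huQ
  have h44 : e₄ * e₄ = ((D:ℤ)*N*t) • e₁ := by
    rw [he₁, he₄]
    refine QuaternionAlgebra.ext ?_ ?_ ?_ ?_ <;>
      simp only [QuaternionAlgebra.re_mul, QuaternionAlgebra.imI_mul, QuaternionAlgebra.imJ_mul,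
        QuaternionAlgebra.imK_mul, QuaternionAlgebra.re_add, QuaternionAlgebra.imI_add,
        QuaternionAlgebra.imJ_add, QuaternionAlgebra.imK_add, QuaternionAlgebra.re_smul,
        QuaternionAlgebra.imI_smul, QuaternionAlgebra.imJ_smul, QuaternionAlgebra.imK_smul,
        QuaternionAlgebra.re_one, QuaternionAlgebra.imI_one, QuaternionAlgebra.imJ_one,
        QuaternionAlgebra.imK_one, zsmul_eq_mul, QuaternionAlgebra.re_intCast,
        QuaternionAlgebra.imI_intCast, QuaternionAlgebra.imJ_intCast, QuaternionAlgebra.imK_intCast] <;>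
      push_cast <;> field_simp
    all_goals first
      | ring1
      | linear_combination ((p:ℚ)) * huQ
      | linear_combination (-(p:ℚ)) * huQ
      | linear_combination (2*(p:ℚ)) * huQ
      | linear_combination (-(2*(p:ℚ))) * huQ
      | linear_combination (8*(p:ℚ)^2) * huQ
      | linear_combination (-(8*(p:ℚ)^2)) * huQ
      | linear_combination ((p:ℚ)*D*N) * htQ
      | linear_combination (-((p:ℚ)*D*N)) * htQ
      | linear_combination (2*(p:ℚ)*s*D*N) * huQ + (2*(p:ℚ)*D*N) * htQ
      | linear_combination (-(2*(p:ℚ)*s*D*N)) * huQ + (-(2*(p:ℚ)*D*N)) * htQ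
      | linear_combination (-((D:ℚ)*N)) * htQ

  refine ⟨he₁ ▸ m1, fun x hx y hy => ?_, ?_⟩
  · have hxy := Submodule.mul_mem_mul hx hy
    rw [Submodule.span_mul_span] at hxy
    refine Submodule.span_le.mpr ?_ hxy
    rintro z ⟨a, ha, b, hb, rfl⟩
    simp only [Set.mem_insert_iff, Set.mem_singleton_iff] at ha hb
    beta_reduce
    have honeL : ∀ x : ℍ[ℚ, -((D:ℚ)*N), (p:ℚ)], e₁ * x = x := fun x => by
      rw [he₁, one_mul]
    have honeR : ∀ x : ℍ[ℚ, -((D:ℚ)*N), (p:ℚ)], x * e₁ = x := fun x => by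
      rw [he₁, mul_one]
    rcases ha with h | h | h | h <;> rcases hb with h' | h' | h' | h' <;> rw [h, h']
    · rw [honeL]; exact m1
    · rw [honeL]; exact m2
    · rw [honeL]; exact m3
    · rw [honeL]; exact m4
    · rw [honeR]; exact m2
    · rw [h22]; exact add_mem (Submodule.smul_mem _ _ m1) m2
    · rw [h23]; exact add_mem (Submodule.smul_mem _ _ m3) (Submodule.smul_mem _ _ m4)
    · rw [h24]; exact add_mem (Submodule.smul_mem _ _ m3) (Submodule.smul_mem _ _ m4)
    · rw [honeR]; exact m3
    · rw [h32]; exact add_mem (Submodule.smul_mem _ _ m3) (Submodule.smul_mem _ _ m4)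
    · rw [h33]; exact Submodule.smul_mem _ _ m1
    · rw [h34]; exact add_mem (Submodule.smul_mem _ _ m1) (Submodule.smul_mem _ _ m2)
    · rw [honeR]; exact m4
    · rw [h42]; exact add_mem (Submodule.smul_mem _ _ m3) (Submodule.smul_mem _ _ m4)
    · rw [h43]; exact add_mem (Submodule.smul_mem _ _ m1) m2
    · rw [h44]; exact Submodule.smul_mem _ _ m1
  · rw [Fintype.linearIndependent_iff]
    intro g hg
    rw [Fin.sum_univ_four] at hg
    simp only [Matrix.cons_val_zero, Matrix.cons_val_one, Matrix.head_cons,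
      Matrix.cons_val_two, Matrix.tail_cons, Matrix.cons_val_three] at hg
    rw [he₁, he₂, he₃, he₄] at hg
    have c1 := congrArg QuaternionAlgebra.re hg
    have c2 := congrArg QuaternionAlgebra.imI hg
    have c3 := congrArg QuaternionAlgebra.imJ hg
    have c4 := congrArg QuaternionAlgebra.imK hg
    simp only [QuaternionAlgebra.re_add, QuaternionAlgebra.imI_add, QuaternionAlgebra.imJ_add,
      QuaternionAlgebra.imK_add, QuaternionAlgebra.re_smul, QuaternionAlgebra.imI_smul,
      QuaternionAlgebra.imJ_smul, QuaternionAlgebra.imK_smul, QuaternionAlgebra.re_one,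
      QuaternionAlgebra.imI_one, QuaternionAlgebra.imJ_one, QuaternionAlgebra.imK_one,
      QuaternionAlgebra.re_zero, QuaternionAlgebra.imI_zero, QuaternionAlgebra.imJ_zero,
      QuaternionAlgebra.imK_zero, smul_eq_mul, mul_zero, mul_one, add_zero, zero_add] at c1 c2 c3 c4
    have hg3 : g 3 = 0 := by field_simp at c4; linarith
    have hg2 : g 2 = 0 := by rw [hg3] at c3; field_simp at c3; simpa [hp0] using c3
    have hg1 : g 1 = 0 := by field_simp at c2; linarith
    have hg0 : g 0 = 0 := by rw [hg1] at c1; linarith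
    intro i
    fin_cases i <;> assumption
end

section
/- Let 𝒪 = ℤe₁ + ℤe₂ + ℤe₃ + ℤe₄ ⊂ B. With μ = I, the set μ^⊥ = {β ∈ 𝒪 : tr(β·μ̄) = 0} equals ℤ·1 + ℤe₃ + ℤe₄, and for all integers x, y one has tr(xe₃ + ye₄)² − 4·nr(xe₃ + ye₄) = 4p x² + 4sDN xy + 4tDN y². In particular the quadratic form Q_μ(x, y) = disc(xe₃ + ye₄) equals 4px² + 4sDNxy + 4tDNy². -/
open Quaternion

/-- In the case `Q = 4Q′` (`DN ≡ 3 (mod 4)`, `p` an odd prime with `p ∤ DN`, `s` odd,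
`4pt = s²DN + 1`), with `𝒪 = ℤe₁ + ℤe₂ + ℤe₃ + ℤe₄` and `μ = I`, the set
`μ^⊥ = {β ∈ 𝒪 : tr(βμ̄) = 0}` equals `ℤ·1 + ℤe₃ + ℤe₄`, and for all integers `x, y` one has
`tr(xe₃ + ye₄)² − 4·nr(xe₃ + ye₄) = 4px² + 4sDNxy + 4tDNy²`; in particular the quadratic
form `Q_μ(x, y) = disc(xe₃ + ye₄)` equals `4px² + 4sDNxy + 4tDNy²`. -/
theorem stmt6 (D N p : ℕ) (hD : 0 < D) (hN : 0 < N)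
    (hDN4 : (D * N) % 4 = 3) (hp : p.Prime) (hpodd : p ≠ 2) (hpDN : ¬ (p ∣ D * N))
    (s t : ℤ) (hs : Odd s) (ht : 4 * (p : ℤ) * t = s ^ 2 * D * N + 1)
    (e₁ e₂ e₃ e₄ μ : ℍ[ℚ, -((D:ℚ)*N), (p:ℚ)])
    (he₁ : e₁ = 1)
    (he₂ : e₂ = ⟨1/2, 1/2, 0, 0⟩)
    (he₃ : e₃ = ⟨0, 0, 1, 0⟩)
    (he₄ : e₄ = ⟨0, 0, (s:ℚ)*D*N/(2*p), 1/(2*p)⟩)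
    (hμ : μ = ⟨0, 1, 0, 0⟩) :
    {β : ℍ[ℚ, -((D:ℚ)*N), (p:ℚ)] |
        β ∈ Submodule.span ℤ ({e₁, e₂, e₃, e₄} : Set _) ∧ qtr (β * star μ) = 0}
      = (Submodule.span ℤ ({1, e₃, e₄} : Set (ℍ[ℚ, -((D:ℚ)*N), (p:ℚ)])) : Set _) ∧
    ∀ x y : ℤ, qtr (x • e₃ + y • e₄) ^ 2 - 4 * qnr D N p (x • e₃ + y • e₄)
      = 4 * (p:ℚ) * x ^ 2 + 4 * s * D * N * (x * y) + 4 * t * D * N * y ^ 2 := by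
  have hp0 : (p:ℚ) ≠ 0 := Nat.cast_ne_zero.mpr hp.pos.ne'
  have hD0 : (D:ℚ) ≠ 0 := Nat.cast_ne_zero.mpr hD.ne'
  have hN0 : (N:ℚ) ≠ 0 := Nat.cast_ne_zero.mpr hN.ne'
  have htQ : 4 * (p:ℚ) * (t:ℚ) = (s:ℚ) ^ 2 * D * N + 1 := by exact_mod_cast ht
  constructor
  · ext β
    simp only [Set.mem_setOf_eq, SetLike.mem_coe]
    constructor
    · rintro ⟨hmem, htr⟩
      rw [Submodule.mem_span_insert] at hmem
      obtain ⟨a, z, hz, rfl⟩ := hmem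
      rw [Submodule.mem_span_insert] at hz
      obtain ⟨b, w, hw, rfl⟩ := hz
      rw [Submodule.mem_span_insert] at hw
      obtain ⟨c, v, hv, rfl⟩ := hw
      rw [Submodule.mem_span_singleton] at hv
      obtain ⟨d, rfl⟩ := hv
      have hb : (b : ℚ) = 0 := by
        simp only [qtr, he₁, he₂, he₃, he₄, hμ, QuaternionAlgebra.re_mul,
          QuaternionAlgebra.re_add, QuaternionAlgebra.imI_add, QuaternionAlgebra.imJ_add,
          QuaternionAlgebra.imK_add, QuaternionAlgebra.re_smul, QuaternionAlgebra.imI_smul,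
          QuaternionAlgebra.imJ_smul, QuaternionAlgebra.imK_smul, QuaternionAlgebra.re_one,
          QuaternionAlgebra.imI_one, QuaternionAlgebra.imJ_one, QuaternionAlgebra.imK_one,
          QuaternionAlgebra.re_star, QuaternionAlgebra.imI_star, QuaternionAlgebra.imJ_star,
          QuaternionAlgebra.imK_star, zsmul_eq_mul (α := ℚ)] at htr
        have hDN0' : (D:ℚ) * N ≠ 0 := mul_ne_zero hD0 hN0
        field_simp at htr
        have htr' : (D:ℚ) * N * b = 0 := by linear_combination htr
        exact (mul_eq_zero.mp htr').resolve_left (mul_ne_zero hD0 hN0)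
      have hb0 : b = 0 := by exact_mod_cast hb
      subst hb0
      have h1 : (1 : ℍ[ℚ, -((D:ℚ)*N), (p:ℚ)]) ∈
          Submodule.span ℤ ({1, e₃, e₄} : Set (ℍ[ℚ, -((D:ℚ)*N), (p:ℚ)])) :=
        Submodule.subset_span (by simp)
      have h3 : e₃ ∈ Submodule.span ℤ ({1, e₃, e₄} : Set (ℍ[ℚ, -((D:ℚ)*N), (p:ℚ)])) :=
        Submodule.subset_span (by simp)
      have h4 : e₄ ∈ Submodule.span ℤ ({1, e₃, e₄} : Set (ℍ[ℚ, -((D:ℚ)*N), (p:ℚ)])) :=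
        Submodule.subset_span (by simp)
      rw [he₁]
      simpa using Submodule.add_mem _ (Submodule.smul_mem _ a h1)
        (Submodule.add_mem _ (Submodule.smul_mem _ c h3) (Submodule.smul_mem _ d h4))
    · intro hmem
      refine ⟨?_, ?_⟩
      · refine Submodule.span_mono ?_ hmem
        intro q hq
        rcases hq with h | h | h
        · left; rw [he₁, h]
        · right; right; left; exact h
        · right; right; right; exact h
      · have himI : β.imI = 0 := by
          refine Submodule.span_induction (p := fun q _ => q.imI = 0) ?_ ?_ ?_ ?_ hmem
          · rintro q (h | h | h)
            · rw [h]; simp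
            · rw [h, he₃]
            · rw [h, he₄]
          · simp
          · intro q r _ _ hq hr
            simp [hq, hr]
          · intro n q _ hq
            simp [hq]
        simp [qtr, hμ, QuaternionAlgebra.re_mul, himI]
  · intro x y
    simp only [qtr, qnr, he₃, he₄,
      QuaternionAlgebra.re_add, QuaternionAlgebra.imI_add, QuaternionAlgebra.imJ_add,
      QuaternionAlgebra.imK_add, QuaternionAlgebra.re_smul, QuaternionAlgebra.imI_smul,
      QuaternionAlgebra.imJ_smul, QuaternionAlgebra.imK_smul, zsmul_eq_mul (α := ℚ)]
    field_simp
    linear_combination (-4 * (D:ℚ) * (N:ℚ) * (y:ℚ)^2) * htQ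
end

section
/- Set α₁ = e₃ − ((p−1)/2)e₄, α₂ = −sDN·1 − e₄, α₃ = 1, α₄ = e₂ in B and μ = I (so μ⁻¹ = −I/(DN)). Then α₁, α₂, α₃, α₄ form a symplectic basis with respect to μ: the 4×4 matrix with (i, j) entry tr(μ⁻¹ αᵢ ᾱⱼ) equals the standard symplectic matrix [[0₂, 1₂], [−1₂, 0₂]]. -/
open Quaternion

set_option maxHeartbeats 1600000 in
/-- In the primitive case (`p ≡ 1 (mod 4)` prime, `p ∤ 2DN`, `s` even, `pt = s²DN + 1`),
setting `α₁ = e₃ − ((p−1)/2)e₄`, `α₂ = −sDN·1 − e₄`, `α₃ = 1`, `α₄ = e₂` and `μ = I`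
(so `μ⁻¹ = −I/(DN)`), the `4×4` matrix with `(i,j)` entry `tr(μ⁻¹ αᵢ ᾱⱼ)` equals the
standard symplectic matrix `[[0₂, 1₂], [−1₂, 0₂]]`, i.e. `α₁, α₂, α₃, α₄` form a
symplectic basis with respect to `μ`. -/
theorem stmt7 (D N p : ℕ) (hD : 0 < D) (hN : 0 < N)
    (hp : p.Prime) (hp4 : p % 4 = 1) (hpDN : ¬ (p ∣ 2 * D * N))
    (s t : ℤ) (hs : Even s) (ht : (p : ℤ) * t = s ^ 2 * D * N + 1)
    (e₁ e₂ e₃ e₄ μinv : ℍ[ℚ, -((D:ℚ)*N), (p:ℚ)])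
    (he₁ : e₁ = 1)
    (he₂ : e₂ = ⟨1/2, 0, 1/2, 0⟩)
    (he₃ : e₃ = ⟨0, 1/2, 0, 1/2⟩)
    (he₄ : e₄ = ⟨0, 0, (s:ℚ)*D*N/p, 1/p⟩)
    (hμinv : μinv = ⟨0, -1/((D:ℚ)*N), 0, 0⟩)
    (α : Fin 4 → ℍ[ℚ, -((D:ℚ)*N), (p:ℚ)])
    (hα : α = ![e₃ - (((p:ℚ) - 1)/2) • e₄, (-(s:ℚ)*D*N) • 1 - e₄, 1, e₂]) :
    Matrix.of (fun i j => qtr (μinv * α i * star (α j)))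
      = !![0, 0, 1, 0; 0, 0, 0, 1; -1, 0, 0, 0; 0, -1, 0, 0] := by
  have hp0 : (p:ℚ) ≠ 0 := Nat.cast_ne_zero.mpr hp.ne_zero
  have hDN : (D:ℚ)*N ≠ 0 := by positivity
  have key : ∀ (x1 x2 x3 x4 y1 y2 y3 y4 : ℚ),
      qtr (μinv * (⟨x1,x2,x3,x4⟩ : ℍ[ℚ, -((D:ℚ)*N), (p:ℚ)]) * star (⟨y1,y2,y3,y4⟩ : ℍ[ℚ, -((D:ℚ)*N), (p:ℚ)]))
      = 2 * (-1/((D:ℚ)*N)) * (-((D:ℚ)*N)) * (x2*y1 - x1*y2 + p*(x3*y4 - x4*y3)) := by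
    intro x1 x2 x3 x4 y1 y2 y3 y4
    rw [hμinv, QuaternionAlgebra.star_mk]
    simp only [qtr, QuaternionAlgebra.mk_mul_mk]
    ring
  have h2 : 2 * (-1/((D:ℚ)*N)) * (-((D:ℚ)*N)) = 2 := by field_simp
  rw [h2] at key
  set q : ℚ := ((p:ℚ) - 1)/2 with hq
  have hα0 : α 0 = ⟨0, 1/2, -(q * ((s:ℚ)*D*N/p)), 1/2 - q * (1/p)⟩ := by
    rw [hα]; show e₃ - q • e₄ = _
    rw [he₃, he₄]; ext <;> simp
  have hα1 : α 1 = ⟨-(s:ℚ)*D*N, 0, -((s:ℚ)*D*N/p), -(1/p)⟩ := by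
    rw [hα]; show (-(s:ℚ)*D*N) • 1 - e₄ = _
    rw [he₄]; ext <;> simp
  have hα2 : α 2 = ⟨1, 0, 0, 0⟩ := by
    rw [hα]; show (1 : ℍ[ℚ, -((D:ℚ)*N), (p:ℚ)]) = _; rfl
  have hα3 : α 3 = ⟨1/2, 0, 1/2, 0⟩ := by rw [hα]; exact he₂
  ext i j
  fin_cases i <;> fin_cases j <;>
    simp only [Matrix.of_apply, Fin.mk_zero, Fin.mk_one,
      show (⟨2, by omega⟩ : Fin 4) = 2 from rfl, show (⟨3, by omega⟩ : Fin 4) = 3 from rfl,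
      hα0, hα1, hα2, hα3, key, Matrix.cons_val_zero, Matrix.cons_val_one, Matrix.head_cons,
      Matrix.cons_val_two, Matrix.cons_val_three, Matrix.tail_cons, Matrix.head_fin_const,
      Matrix.cons_val', Matrix.empty_val', Matrix.cons_val_fin_one] <;>
    field_simp <;> ring
end

section
/- Let D, N, p be positive integers and s an integer. For every z in the complex upper half-plane (Im z > 0), the matrix τ_z defined by the case-1 period formulas is symmetric with positive definite imaginary part, i.e., τ_z lies in the Siegel upper half-space ℍ₂. -/
open Matrix

lemma im_aux (α β γ : ℝ) (z : ℂ) :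
    ((α:ℂ) * z⁻¹ + (β:ℂ) + (γ:ℂ) * z).im
      = α * (-z.im / Complex.normSq z) + γ * z.im := by
  simp [Complex.add_im, Complex.mul_im, Complex.inv_im, Complex.inv_re]

lemma div_split (a b c w z : ℂ) (hz : z ≠ 0) (hw : w ≠ 0) :
    (a + b*z + c*z^2)/(w*z) = (a/w)*z⁻¹ + b/w + (c/w)*z := by
  field_simp

set_option maxHeartbeats 1000000 in
/-- Let `D, N, p` be positive integers and `s` an integer.  For `z` in the complex upper
half-plane, the matrix `τ_z` defined by the case-1 period formulas (with
`ε = (1+√p)/2`, `ε̄ = (1−√p)/2`):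
`τ₁ = (−ε̄² + (p−1)sDNz/2 + DNε²z²)/(pz)`, `τ₂ = (ε̄ − (p−1)sDNz − DNεz²)/(pz)`,
`τ₃ = (−1 − 2sDNz + DNz²)/(pz)` is symmetric with positive definite imaginary part,
i.e. `τ_z` lies in the Siegel upper half-space `ℍ₂`. -/
theorem stmt10 (D N p : ℕ) (hD : 0 < D) (hN : 0 < N) (hp : 0 < p) (s : ℤ)
    (z : ℂ) (hz : 0 < z.im)
    (ε εbar : ℂ)
    (hε : ε = (1 + (Real.sqrt p : ℂ)) / 2)
    (hεbar : εbar = (1 - (Real.sqrt p : ℂ)) / 2)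
    (τ₁ τ₂ τ₃ : ℂ)
    (h₁ : τ₁ = (-εbar ^ 2 + ((p:ℂ) - 1) * s * D * N * z / 2 + (D:ℂ) * N * ε ^ 2 * z ^ 2)
      / ((p:ℂ) * z))
    (h₂ : τ₂ = (εbar - ((p:ℂ) - 1) * s * D * N * z - (D:ℂ) * N * ε * z ^ 2) / ((p:ℂ) * z))
    (h₃ : τ₃ = (-1 - 2 * (s:ℂ) * D * N * z + (D:ℂ) * N * z ^ 2) / ((p:ℂ) * z)) :
    (!![τ₁, τ₂; τ₂, τ₃] : Matrix (Fin 2) (Fin 2) ℂ).IsSymm ∧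
    ((!![τ₁, τ₂; τ₂, τ₃] : Matrix (Fin 2) (Fin 2) ℂ).map Complex.im).PosDef := by
  have hz0 : z ≠ 0 := fun h => by simp [h] at hz
  have hp0 : (0:ℝ) < (p:ℝ) := by exact_mod_cast hp
  have hpc : ((p:ℂ)) ≠ 0 := by exact_mod_cast hp.ne'
  set q : ℝ := Real.sqrt p with hqdef
  have hq0 : 0 < q := Real.sqrt_pos.mpr hp0
  have hq2 : q ^ 2 = (p:ℝ) := Real.sq_sqrt hp0.le
  have hr : 0 < Complex.normSq z := Complex.normSq_pos.mpr hz0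
  set r : ℝ := Complex.normSq z with hrdef
  set y : ℝ := z.im with hydef
  -- rewrite each τ as α z⁻¹ + β + γ z with real coefficients
  have e1 : τ₁ = ((-(((1-q)/2)^2)/p : ℝ) : ℂ) * z⁻¹
      + (((((p:ℝ)-1)*(s:ℝ)*D*N/2)/p : ℝ) : ℂ)
      + (((D*N*((1+q)/2)^2)/p : ℝ) : ℂ) * z := by
    have c1a : -εbar^2/(p:ℂ) = ((-(((1-q)/2)^2)/p : ℝ) : ℂ) := by
      rw [hεbar]; push_cast; ring
    have c1b : (((p:ℂ)-1)*(s:ℂ)*(D:ℂ)*(N:ℂ)/2)/(p:ℂ)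
        = (((((p:ℝ)-1)*(s:ℝ)*D*N/2)/p : ℝ) : ℂ) := by push_cast; ring
    have c1c : ((D:ℂ)*N*ε^2)/(p:ℂ) = (((D*N*((1+q)/2)^2)/p : ℝ) : ℂ) := by
      rw [hε]; push_cast; ring
    rw [h₁, show (-εbar ^ 2 + ((p:ℂ) - 1) * s * D * N * z / 2 + (D:ℂ) * N * ε ^ 2 * z ^ 2)
        = (-εbar^2) + (((p:ℂ)-1)*(s:ℂ)*(D:ℂ)*(N:ℂ)/2)*z + ((D:ℂ)*N*ε^2)*z^2 by ring,
      div_split _ _ _ _ _ hz0 hpc, c1a, c1b, c1c]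
  have e2 : τ₂ = (((((1-q)/2))/p : ℝ) : ℂ) * z⁻¹
      + (((-(((p:ℝ)-1)*(s:ℝ)*D*N))/p : ℝ) : ℂ)
      + (((-(D*N*((1+q)/2)))/p : ℝ) : ℂ) * z := by
    have c2a : εbar/(p:ℂ) = (((((1-q)/2))/p : ℝ) : ℂ) := by
      rw [hεbar]; push_cast; ring
    have c2b : (-(((p:ℂ)-1)*(s:ℂ)*(D:ℂ)*(N:ℂ)))/(p:ℂ)
        = (((-(((p:ℝ)-1)*(s:ℝ)*D*N))/p : ℝ) : ℂ) := by push_cast; ring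
    have c2c : (-((D:ℂ)*N*ε))/(p:ℂ) = (((-(D*N*((1+q)/2)))/p : ℝ) : ℂ) := by
      rw [hε]; push_cast; ring
    rw [h₂, show (εbar - ((p:ℂ) - 1) * s * D * N * z - (D:ℂ) * N * ε * z ^ 2)
        = εbar + (-(((p:ℂ)-1)*(s:ℂ)*(D:ℂ)*(N:ℂ)))*z + (-((D:ℂ)*N*ε))*z^2 by ring,
      div_split _ _ _ _ _ hz0 hpc, c2a, c2b, c2c]
  have e3 : τ₃ = (((-1)/p : ℝ) : ℂ) * z⁻¹
      + (((-(2*(s:ℝ)*D*N))/p : ℝ) : ℂ)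
      + ((((D:ℝ)*N)/p : ℝ) : ℂ) * z := by
    have c3a : (-1:ℂ)/(p:ℂ) = ((((-1:ℝ))/p : ℝ) : ℂ) := by push_cast; ring
    have c3b : (-(2*(s:ℂ)*(D:ℂ)*(N:ℂ)))/(p:ℂ)
        = (((-(2*(s:ℝ)*D*N))/p : ℝ) : ℂ) := by push_cast; ring
    have c3c : ((D:ℂ)*(N:ℂ))/(p:ℂ) = ((((D:ℝ)*N)/p : ℝ) : ℂ) := by push_cast; ring
    rw [h₃, show (-1 - 2 * (s:ℂ) * D * N * z + (D:ℂ) * N * z ^ 2)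
        = (-1:ℂ) + (-(2*(s:ℂ)*(D:ℂ)*(N:ℂ)))*z + ((D:ℂ)*(N:ℂ))*z^2 by ring,
      div_split _ _ _ _ _ hz0 hpc, c3a, c3b, c3c]
  have ha : τ₁.im = (-(((1-q)/2)^2)/p) * (-y / r) + (D*N*((1+q)/2)^2)/p * y := by
    rw [e1, im_aux]
  have hb : τ₂.im = ((((1-q)/2))/p) * (-y / r) + (-(D*N*((1+q)/2)))/p * y := by
    rw [e2, im_aux]
  have hc : τ₃.im = ((-1)/p) * (-y / r) + ((D:ℝ)*N)/p * y := by
    rw [e3, im_aux]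
  have hD0 : (0:ℝ) < (D:ℝ) := by exact_mod_cast hD
  have hN0 : (0:ℝ) < (N:ℝ) := by exact_mod_cast hN
  have hapos : 0 < τ₁.im := by
    rw [ha]
    have h1 : 0 ≤ (-(((1-q)/2)^2)/p) * (-y / r) := by
      rw [neg_div, neg_mul, neg_div, mul_neg, neg_neg]
      positivity
    have h2 : 0 < (D*N*((1+q)/2)^2)/p * y := by positivity
    linarith
  have hcpos : 0 < τ₃.im := by
    rw [hc]
    have h1 : 0 < ((-1:ℝ)/p) * (-y / r) := by
      rw [neg_div, neg_mul, neg_div, mul_neg, neg_neg]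
      positivity
    have h2 : 0 < ((D:ℝ)*N)/p * y := by positivity
    linarith
  have hdet : τ₁.im * τ₃.im - τ₂.im ^ 2 = (D:ℝ)*N*y^2/((p:ℝ)*r) := by
    rw [ha, hb, hc, ← hq2]
    have hq0' : q ≠ 0 := hq0.ne'
    have hr0 : r ≠ 0 := hr.ne'
    field_simp
    ring
  have hdetpos : 0 < τ₁.im * τ₃.im - τ₂.im ^ 2 := by
    rw [hdet]; positivity
  constructor
  · ext i j
    fin_cases i <;> fin_cases j <;> simp [Matrix.transpose_apply]
  · have hmap : ((!![τ₁, τ₂; τ₂, τ₃] : Matrix (Fin 2) (Fin 2) ℂ).map Complex.im)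
        = !![τ₁.im, τ₂.im; τ₂.im, τ₃.im] := by
      ext i j
      fin_cases i <;> fin_cases j <;> simp [Matrix.map_apply]
    rw [hmap]
    constructor
    · ext i j
      fin_cases i <;> fin_cases j <;> simp [Matrix.conjTranspose_apply]
    · intro x hx
      have hx' : x 0 ≠ 0 ∨ x 1 ≠ 0 := by
        by_contra h
        push_neg at h
        apply hx
        ext i
        fin_cases i <;> simp [h.1, h.2]
      have hgoal : (x.sum fun i xi ↦ x.sum fun j xj ↦
            star xi * (!![τ₁.im, τ₂.im; τ₂.im, τ₃.im] : Matrix (Fin 2) (Fin 2) ℝ) i j * xj)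
          = τ₁.im * (x 0)^2 + 2 * τ₂.im * (x 0 * x 1) + τ₃.im * (x 1)^2 := by
        simp [Finsupp.sum_fintype, Fin.sum_univ_two]
        ring
      rw [hgoal]
      rcases hx' with h0 | h1
      · rcases eq_or_ne (x 1) 0 with h1 | h1
        · have h2 : 0 < τ₁.im * (x 0)^2 :=
            mul_pos hapos (pow_pos (abs_pos.mpr h0) 2 |>.trans_le (by rw [sq_abs]))
          simp only [h1, mul_zero, zero_pow, mul_zero, add_zero]
          nlinarith [pow_pos (abs_pos.mpr h0) 2, sq_abs (x 0)]
        · nlinarith [sq_nonneg (τ₁.im * x 0 + τ₂.im * x 1),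
            mul_pos hdetpos (pow_pos (abs_pos.mpr h1) 2), sq_abs (x 1)]
      · nlinarith [sq_nonneg (τ₁.im * x 0 + τ₂.im * x 1),
          mul_pos hdetpos (pow_pos (abs_pos.mpr h1) 2), sq_abs (x 1)]
end

section
/- Let D, N, p be positive integers and s an integer. For every z in the complex upper half-plane (Im z > 0), the matrix τ_z defined by the case-2 period formulas is symmetric with positive definite imaginary part, i.e., τ_z lies in the Siegel upper half-space ℍ₂. -/
private lemma quad_pos {A B C x0 x1 : ℝ} (hA : 0 < A) (hdet : 0 < A * C - B ^ 2)
    (hx : x0 ≠ 0 ∨ x1 ≠ 0) : 0 < A * x0 ^ 2 + 2 * B * x0 * x1 + C * x1 ^ 2 := by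
  by_cases h1 : x1 = 0
  · have hx0 : x0 ≠ 0 := by tauto
    subst h1
    have : 0 < x0 ^ 2 := by positivity
    nlinarith
  · have h1' : 0 < x1 ^ 2 := by positivity
    nlinarith [sq_nonneg (A * x0 + B * x1), mul_pos hdet h1']

/-- Let `D, N, p` be positive integers and `s` an integer.  For `z` in the complex upper
half-plane, the matrix `τ_z` defined by the case-2 period formulas
`τ₁ = (DNz² + 2z − 1)/(4z)`, `τ₂ = −(DNz² + 1)/(4√p z)`,
`τ₃ = (DNz² − 2sDNz − 1)/(4pz)` is symmetric with positive definite imaginary part,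
i.e. `τ_z` lies in the Siegel upper half-space `ℍ₂`. -/
theorem stmt11 (D N p : ℕ) (hD : 0 < D) (hN : 0 < N) (hp : 0 < p) (s : ℤ)
    (z : ℂ) (hz : 0 < z.im)
    (τ₁ τ₂ τ₃ : ℂ)
    (h₁ : τ₁ = ((D:ℂ) * N * z ^ 2 + 2 * z - 1) / (4 * z))
    (h₂ : τ₂ = -((D:ℂ) * N * z ^ 2 + 1) / (4 * (Real.sqrt p : ℂ) * z))
    (h₃ : τ₃ = ((D:ℂ) * N * z ^ 2 - 2 * (s:ℂ) * D * N * z - 1) / (4 * (p:ℂ) * z)) :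
    (!![τ₁, τ₂; τ₂, τ₃] : Matrix (Fin 2) (Fin 2) ℂ).IsSymm ∧
    ((!![τ₁, τ₂; τ₂, τ₃] : Matrix (Fin 2) (Fin 2) ℂ).map Complex.im).PosDef := by
  have hz0 : z ≠ 0 := by
    intro h; rw [h] at hz; simp at hz
  set a : ℝ := (D : ℝ) * N with ha
  have ha0 : 0 < a := by positivity
  set q : ℝ := Complex.normSq z with hqdef
  have hq : 0 < q := Complex.normSq_pos.mpr hz0
  set y : ℝ := z.im with hy
  set xr : ℝ := z.re with hxr
  have hqxy : q = xr ^ 2 + y ^ 2 := by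
    rw [hqdef, Complex.normSq_apply]; ring
  set sp : ℝ := Real.sqrt p with hsp
  have hsp0 : 0 < sp := Real.sqrt_pos.mpr (by positivity)
  have hsp2 : sp ^ 2 = (p : ℝ) := Real.sq_sqrt (by positivity)
  have hp0 : (0:ℝ) < (p:ℝ) := by positivity
  -- imaginary parts
  have hA : τ₁.im = y * (a * q + 1) / (4 * q) := by
    have hv : (4 : ℂ) * z ≠ 0 := mul_ne_zero (by norm_num) hz0
    rw [h₁, Complex.div_im, div_sub_div_same,
      div_eq_div_iff (ne_of_gt (Complex.normSq_pos.mpr hv)) (by positivity)]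
    simp only [Complex.normSq_apply, Complex.mul_im, Complex.mul_re, Complex.sub_im,
      Complex.sub_re, Complex.add_im, Complex.add_re, Complex.one_re, Complex.one_im,
      Complex.re_ofNat, Complex.im_ofNat, Complex.natCast_re, Complex.natCast_im, pow_two]
    rw [← hy, ← hxr, hqxy]
    ring
  have hB : τ₂.im = y * (1 - a * q) / (4 * q * sp) := by
    have hspc : ((sp : ℂ)) ≠ 0 := by
      exact_mod_cast hsp0.ne'
    have hv : (4 : ℂ) * (sp : ℂ) * z ≠ 0 := mul_ne_zero (mul_ne_zero (by norm_num) hspc) hz0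
    rw [h₂, Complex.div_im, div_sub_div_same,
      div_eq_div_iff (ne_of_gt (Complex.normSq_pos.mpr hv)) (by positivity)]
    simp only [Complex.normSq_apply, Complex.mul_im, Complex.mul_re, Complex.neg_im,
      Complex.neg_re, Complex.add_im, Complex.add_re, Complex.one_re, Complex.one_im,
      Complex.re_ofNat, Complex.im_ofNat, Complex.natCast_re, Complex.natCast_im,
      Complex.ofReal_re, Complex.ofReal_im, pow_two]
    rw [← hy, ← hxr, hqxy]
    ring
  have hC : τ₃.im = y * (a * q + 1) / (4 * (p : ℝ) * q) := by
    have hpc : ((p : ℂ)) ≠ 0 := by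
      exact_mod_cast hp0.ne'
    have hv : (4 : ℂ) * (p : ℂ) * z ≠ 0 := mul_ne_zero (mul_ne_zero (by norm_num) hpc) hz0
    rw [h₃, Complex.div_im, div_sub_div_same,
      div_eq_div_iff (ne_of_gt (Complex.normSq_pos.mpr hv)) (by positivity)]
    simp only [Complex.normSq_apply, Complex.mul_im, Complex.mul_re, Complex.sub_im,
      Complex.sub_re, Complex.add_im, Complex.add_re, Complex.one_re, Complex.one_im,
      Complex.re_ofNat, Complex.im_ofNat, Complex.natCast_re, Complex.natCast_im,
      Complex.intCast_re, Complex.intCast_im, pow_two]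
    rw [← hy, ← hxr, hqxy]
    ring
  have hApos : 0 < τ₁.im := by rw [hA]; positivity
  have hdet : 0 < τ₁.im * τ₃.im - τ₂.im ^ 2 := by
    rw [hA, hB, hC]
    have key : y * (a * q + 1) / (4 * q) * (y * (a * q + 1) / (4 * (p:ℝ) * q)) -
        (y * (1 - a * q) / (4 * q * sp)) ^ 2 = a * y ^ 2 / (4 * (p:ℝ) * q) := by
      have h4 : (4 * q * sp) ^ 2 = (4 * q) ^ 2 * (p : ℝ) := by
        rw [mul_pow, hsp2]
      rw [div_pow, h4]
      field_simp
      ring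
    rw [key]
    positivity
  constructor
  · ext i j
    fin_cases i <;> fin_cases j <;> simp [Matrix.IsSymm]
  · constructor
    · ext i j
      fin_cases i <;> fin_cases j <;> simp
    · intro x hx
      have hx' : x 0 ≠ 0 ∨ x 1 ≠ 0 := by
        by_contra h
        push_neg at h
        apply hx
        ext i
        fin_cases i <;> simp [h.1, h.2]
      have h := quad_pos hApos hdet hx'
      simp [Matrix.mulVec, dotProduct, Finsupp.sum_fintype, Fin.sum_univ_two]
      nlinarith [h]
end

section
/- Set β₁ = J, β₂ = I, β₃ = (sDNJ + IJ)/(2p) in B. Then for all integers b₁, b₂, b₃, one has −nr(b₁β₁ + b₂β₂ + b₃β₃) = pb₁² + DN(sb₁b₃ − b₂² + tb₃²). In particular, setting d = −nr(b₁β₁ + b₂β₂ + b₃β₃), d is an integer and pb₁² ≡ d (mod DN). -/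
open Quaternion

/-- In the case `Q = 4Q′` (`DN ≡ 3 (mod 4)`, `p` an odd prime with `p ∤ DN`, `s` odd,
`4pt = s²DN + 1`), set `β₁ = J`, `β₂ = I`, `β₃ = (sDN·J + IJ)/(2p)`.  Then for all
integers `b₁, b₂, b₃` one has `−nr(b₁β₁ + b₂β₂ + b₃β₃) = pb₁² + DN(sb₁b₃ − b₂² + tb₃²)`;
in particular `d = −nr(b₁β₁ + b₂β₂ + b₃β₃)` is an integer and `pb₁² ≡ d (mod DN)`. -/
theorem stmt16 (D N p : ℕ) (hD : 0 < D) (hN : 0 < N)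
    (hDN4 : (D * N) % 4 = 3) (hp : p.Prime) (hpodd : p ≠ 2) (hpDN : ¬ (p ∣ D * N))
    (s t : ℤ) (hs : Odd s) (ht : 4 * (p : ℤ) * t = s ^ 2 * D * N + 1)
    (β₁ β₂ β₃ : ℍ[ℚ, -((D:ℚ)*N), (p:ℚ)])
    (hβ₁ : β₁ = ⟨0, 0, 1, 0⟩)
    (hβ₂ : β₂ = ⟨0, 1, 0, 0⟩)
    (hβ₃ : β₃ = ⟨0, 0, (s:ℚ)*D*N/(2*p), 1/(2*p)⟩) :
    ∀ b₁ b₂ b₃ : ℤ,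
      -(qnr D N p (b₁ • β₁ + b₂ • β₂ + b₃ • β₃))
        = (p:ℚ) * b₁ ^ 2 + (D:ℚ) * N * ((s:ℚ) * b₁ * b₃ - (b₂:ℚ) ^ 2 + (t:ℚ) * b₃ ^ 2) ∧
      ∃ d : ℤ,
        (d : ℚ) = -(qnr D N p (b₁ • β₁ + b₂ • β₂ + b₃ • β₃)) ∧
        (p : ℤ) * b₁ ^ 2 ≡ d [ZMOD ((D : ℤ) * N)] := by
  intro b₁ b₂ b₃
  have hp0 : (p : ℚ) ≠ 0 := Nat.cast_ne_zero.mpr hp.ne_zero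
  have hmain : -(qnr D N p (b₁ • β₁ + b₂ • β₂ + b₃ • β₃))
      = (p:ℚ) * b₁ ^ 2 + (D:ℚ) * N * ((s:ℚ) * b₁ * b₃ - (b₂:ℚ) ^ 2 + (t:ℚ) * b₃ ^ 2) := by
    subst hβ₁ hβ₂ hβ₃
    simp only [qnr, QuaternionAlgebra.smul_mk, QuaternionAlgebra.mk_add_mk, zsmul_eq_mul]
    have ht' : 4 * (p : ℚ) * t = (s:ℚ) ^ 2 * D * N + 1 := by exact_mod_cast congrArg (Int.cast : ℤ → ℚ) ht
    field_simp
    ring_nf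
    linear_combination (-1 * (b₃:ℚ)^2 * (D:ℚ) * N) * ht'
  refine ⟨hmain, (p:ℤ) * b₁ ^ 2 + (D:ℤ) * N * (s * b₁ * b₃ - b₂ ^ 2 + t * b₃ ^ 2), ?_, ?_⟩
  · rw [hmain]; push_cast; ring
  · exact Int.modEq_iff_dvd.mpr ⟨s * b₁ * b₃ - b₂ ^ 2 + t * b₃ ^ 2, by ring⟩
end

section
/- Set β₁ = J, β₂ = (I + IJ)/2, β₃ = (sDNJ + IJ)/p in B. Then for all integers b₁, b₂, b₃, one has −nr(b₁β₁ + b₂β₂ + b₃β₃) = pb₁² + 2sDNb₁b₃ + tDNb₃² + DNb₂b₃ + DN(p−1)b₂²/4. In particular, if b₂ and b₃ are even, then d = −nr(b₁β₁ + b₂β₂ + b₃β₃) is an integer satisfying pb₁² ≡ d (mod 4DN). -/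
open Quaternion

/-- In the primitive case (`p ≡ 1 (mod 4)` prime, `p ∤ 2DN`, `s` even, `pt = s²DN + 1`),
set `β₁ = J`, `β₂ = (I + IJ)/2`, `β₃ = (sDN·J + IJ)/p`.  Then for all integers
`b₁, b₂, b₃` one has
`−nr(b₁β₁ + b₂β₂ + b₃β₃) = pb₁² + 2sDNb₁b₃ + tDNb₃² + DNb₂b₃ + DN(p−1)b₂²/4`;
in particular, if `b₂` and `b₃` are even, then `d = −nr(b₁β₁ + b₂β₂ + b₃β₃)` is an
integer satisfying `pb₁² ≡ d (mod 4DN)`. -/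
theorem stmt17 (D N p : ℕ) (hD : 0 < D) (hN : 0 < N)
    (hp : p.Prime) (hp4 : p % 4 = 1) (hpDN : ¬ (p ∣ 2 * D * N))
    (s t : ℤ) (hs : Even s) (ht : (p : ℤ) * t = s ^ 2 * D * N + 1)
    (β₁ β₂ β₃ : ℍ[ℚ, -((D:ℚ)*N), (p:ℚ)])
    (hβ₁ : β₁ = ⟨0, 0, 1, 0⟩)
    (hβ₂ : β₂ = ⟨0, 1/2, 0, 1/2⟩)
    (hβ₃ : β₃ = ⟨0, 0, (s:ℚ)*D*N/p, 1/p⟩) :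
    ∀ b₁ b₂ b₃ : ℤ,
      (-(qnr D N p (b₁ • β₁ + b₂ • β₂ + b₃ • β₃))
        = (p:ℚ) * b₁ ^ 2 + 2 * (s:ℚ) * D * N * b₁ * b₃ + (t:ℚ) * D * N * b₃ ^ 2
          + (D:ℚ) * N * b₂ * b₃ + (D:ℚ) * N * ((p:ℚ) - 1) * (b₂:ℚ) ^ 2 / 4) ∧
      (Even b₂ → Even b₃ →
        ∃ d : ℤ,
          (d : ℚ) = -(qnr D N p (b₁ • β₁ + b₂ • β₂ + b₃ • β₃)) ∧
          (p : ℤ) * b₁ ^ 2 ≡ d [ZMOD (4 * (D : ℤ) * N)]) := by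
  intro b₁ b₂ b₃
  have hp0 : (p:ℚ) ≠ 0 := Nat.cast_ne_zero.mpr hp.ne_zero
  have htQ : (p:ℚ) * t = (s:ℚ) ^ 2 * D * N + 1 := by exact_mod_cast congrArg (Int.cast : ℤ → ℚ) ht
  have key : -(qnr D N p (b₁ • β₁ + b₂ • β₂ + b₃ • β₃))
      = (p:ℚ) * b₁ ^ 2 + 2 * (s:ℚ) * D * N * b₁ * b₃ + (t:ℚ) * D * N * b₃ ^ 2
          + (D:ℚ) * N * b₂ * b₃ + (D:ℚ) * N * ((p:ℚ) - 1) * (b₂:ℚ) ^ 2 / 4 := by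
    subst hβ₁ hβ₂ hβ₃
    simp only [qnr, QuaternionAlgebra.smul_mk, QuaternionAlgebra.mk_add_mk]
    simp only [zsmul_eq_mul]
    field_simp
    linear_combination (-(16:ℚ) * D * N * b₃ ^ 2) * htQ
  refine ⟨key, fun hb₂ hb₃ => ?_⟩
  obtain ⟨c₂, rfl⟩ := hb₂
  obtain ⟨c₃, rfl⟩ := hb₃
  obtain ⟨k, hk⟩ : (4:ℤ) ∣ (p:ℤ) - 1 := by
    have : p % 4 = 1 := hp4
    omega
  refine ⟨(p:ℤ) * b₁ ^ 2 + 4 * (D:ℤ) * N * (s * b₁ * c₃ + t * c₃ ^ 2 + c₂ * c₃ + k * c₂ ^ 2),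
    ?_, ?_⟩
  · rw [key]
    have hkQ : ((p:ℚ) - 1) = 4 * (k:ℚ) := by exact_mod_cast congrArg (Int.cast : ℤ → ℚ) hk
    push_cast
    rw [hkQ]
    ring
  · exact (Int.modEq_iff_dvd.mpr ⟨(s * b₁ * c₃ + t * c₃ ^ 2 + c₂ * c₃ + k * c₂ ^ 2), by ring⟩)
end

section
/- Let p, s, t, D, N be integers with DN ≠ 0 and 4pt = s²DN + 1. Let b₁, b₂, b₃, b₁′, b₂′, b₃′ be integers such that b₁, b₃, b₁′, b₃′ are even, b₁ ≡ b₁′ (mod DN), and pb₁² + DN(sb₁b₃ − b₂² + tb₃²) = pb₁′² + DN(sb₁′b₃′ − b₂′² + tb₃′²). Define A = [[4p, 2sDN, −b₃], [2sDN, 4tDN, b₁], [−b₃, b₁, b₂²]] and A′ = [[4p, 2sDN, −b₃′], [2sDN, 4tDN, b₁′], [−b₃′, b₁′, b₂′²]]. Then u = t(b₃ − b₃′) + (s/2)(b₁ − b₁′) and v = −(s/2)(b₃ − b₃′) − (p/(DN))(b₁ − b₁′) are integers, and A′ = U A Uᵗ where U = [[1, 0, 0], [0, 1, 0], [u, v,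 1]]. In particular A and A′ are congruent over ℤ via a determinant-1 integer matrix, so the corresponding lattices of singular relations are isomorphic. -/
/-- Let `p, s, t, D, N` be integers with `DN ≠ 0` and `4pt = s²DN + 1`.  Let
`b₁, b₂, b₃, b₁′, b₂′, b₃′` be integers such that `b₁, b₃, b₁′, b₃′` are even,
`b₁ ≡ b₁′ (mod DN)`, and
`pb₁² + DN(sb₁b₃ − b₂² + tb₃²) = pb₁′² + DN(sb₁′b₃′ − b₂′² + tb₃′²)`.
Then `u = t(b₃ − b₃′) + (s/2)(b₁ − b₁′)` and `v = −(s/2)(b₃ − b₃′) − (p/(DN))(b₁ − b₁′)`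
are integers and, with `U = [[1,0,0],[0,1,0],[u,v,1]]` (a determinant-one integer
matrix), the Gram matrices `A = [[4p, 2sDN, −b₃], [2sDN, 4tDN, b₁], [−b₃, b₁, b₂²]]`
and `A′ = [[4p, 2sDN, −b₃′], [2sDN, 4tDN, b₁′], [−b₃′, b₁′, b₂′²]]` satisfy
`A′ = U A Uᵗ`; in particular the corresponding lattices are isomorphic. -/
theorem stmt18 (p s t D N : ℤ) (hDN : D * N ≠ 0) (h : 4 * p * t = s ^ 2 * D * N + 1)
    (b₁ b₂ b₃ b₁' b₂' b₃' : ℤ)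
    (hb₁ : Even b₁) (hb₃ : Even b₃) (hb₁' : Even b₁') (hb₃' : Even b₃')
    (hcong : b₁ ≡ b₁' [ZMOD D * N])
    (hnorm : p * b₁ ^ 2 + D * N * (s * b₁ * b₃ - b₂ ^ 2 + t * b₃ ^ 2)
      = p * b₁' ^ 2 + D * N * (s * b₁' * b₃' - b₂' ^ 2 + t * b₃' ^ 2)) :
    ∃ u v : ℤ,
      (u : ℚ) = (t : ℚ) * ((b₃ : ℚ) - (b₃' : ℚ)) + ((s : ℚ) / 2) * ((b₁ : ℚ) - (b₁' : ℚ)) ∧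
      (v : ℚ) = -((s : ℚ) / 2) * ((b₃ : ℚ) - (b₃' : ℚ))
        - ((p : ℚ) / ((D : ℚ) * (N : ℚ))) * ((b₁ : ℚ) - (b₁' : ℚ)) ∧
      (!![4*p, 2*s*D*N, -b₃'; 2*s*D*N, 4*t*D*N, b₁'; -b₃', b₁', b₂'^2]
          : Matrix (Fin 3) (Fin 3) ℤ)
        = !![1, 0, 0; 0, 1, 0; u, v, 1]
          * !![4*p, 2*s*D*N, -b₃; 2*s*D*N, 4*t*D*N, b₁; -b₃, b₁, b₂^2]
          * Matrix.transpose (!![1, 0, 0; 0, 1, 0; u, v, 1] : Matrix (Fin 3) (Fin 3) ℤ) := by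

  obtain ⟨a, ha⟩ := hb₁
  obtain ⟨c, hc⟩ := hb₃
  obtain ⟨a', ha'⟩ := hb₁'
  obtain ⟨c', hc'⟩ := hb₃'
  obtain ⟨k, hk⟩ := hcong.dvd
  subst ha hc ha' hc'
  refine ⟨t * ((c + c) - (c' + c')) + s * (a - a'), -s * (c - c') + p * k, ?_, ?_, ?_⟩
  · push_cast
    ring
  · have hDNQ : (D : ℚ) * (N : ℚ) ≠ 0 := by
      exact_mod_cast (Int.cast_ne_zero (α := ℚ)).2 hDN
    have hkq : ((a' : ℚ) + a') - ((a : ℚ) + a) = (D : ℚ) * N * k := by exact_mod_cast hk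
    have hD : (D : ℚ) ≠ 0 := left_ne_zero_of_mul hDNQ
    have hN : (N : ℚ) ≠ 0 := right_ne_zero_of_mul hDNQ
    push_cast
    field_simp
    linear_combination (-2 : ℚ) * (p : ℚ) * hkq
  · set u : ℤ := t * ((c + c) - (c' + c')) + s * (a - a') with hu
    set v : ℤ := -s * (c - c') + p * k with hv
    have R1 : 4 * p * u + 2 * s * (D * N) * v = (c + c) - (c' + c') := by
      rw [hu, hv]; linear_combination 2 * (c - c') * h - 2 * s * p * hk
    have R2 : 2 * s * (D * N) * u + 4 * t * (D * N) * v = (a' + a') - (a + a) := by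
      rw [hu, hv]; linear_combination (-2) * (a - a') * h - 4 * t * p * hk
    have key : D * N * (b₂' ^ 2)
        = D * N * (-u * ((c + c) + (c' + c')) + v * ((a + a) + (a' + a')) + b₂ ^ 2) := by
      rw [hu, hv]; linear_combination hnorm + 2 * p * (a + a') * hk
    have key2 : b₂' ^ 2
        = -u * ((c + c) + (c' + c')) + v * ((a + a) + (a' + a')) + b₂ ^ 2 :=
      mul_left_cancel₀ hDN key
    ext i j
    fin_cases i <;> fin_cases j <;>
      simp [Matrix.mul_apply, Fin.sum_univ_succ, Matrix.transpose_apply, Matrix.cons_val_zero,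
        Matrix.cons_val_one, Matrix.head_cons, Matrix.head_fin_const, Matrix.cons_val_fin_one,
        Matrix.transpose, Matrix.of_apply, Matrix.vecHead, Matrix.vecTail]
    · linear_combination -R1
    · linear_combination -R2
    · linear_combination -R1
    · linear_combination -R2
    · linear_combination key2 - u * R1 - v * R2
end

section
/- Let D, N, p be positive integers, s an integer, and c₁, c₂, c₃ rational numbers with c₁ + c₃√p ≠ 0. Suppose d := −DNc₁² + pc₂² + DNpc₃² is negative, and set z = (c₂√p + i√|d|)/(DN(c₁ + c₃√p)) (a nonzero complex number). Then, with τ₁, τ₂, τ₃ given by the case-2 period formulas at this z, one has −c₁τ₂ + pc₃τ₃ − (c₂ − sDNc₃)/2 = 0. Equivalently, writing b₂ = c₁, b₃ = 2pc₃, b₁ = c₂ − sDNc₃, the matrix τ_z satisfies the singular relation ℓ₃ = (0, −b₂, b₃/2, 0, −b₁/2). -/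
/-- Let `D, N, p` be positive integers, `s` an integer, and `c₁, c₂, c₃` rational numbers
with `c₁ + c₃√p ≠ 0`.  Suppose `d = −DNc₁² + pc₂² + DNpc₃²` is negative, and set
`z = (c₂√p + i√|d|)/(DN(c₁ + c₃√p))`.  Then, with `τ₁, τ₂, τ₃` given by the case-2
period formulas at this `z`, one has `−c₁τ₂ + pc₃τ₃ − (c₂ − sDNc₃)/2 = 0`; equivalently,
writing `b₂ = c₁`, `b₃ = 2pc₃`, `b₁ = c₂ − sDNc₃`, the matrix `τ_z` satisfies the
singular relation `ℓ₃ = (0, −b₂, b₃/2, 0, −b₁/2)`. -/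
theorem stmt19 (D N p : ℕ) (hD : 0 < D) (hN : 0 < N) (hp : 0 < p) (s : ℤ)
    (c₁ c₂ c₃ : ℚ) (hne : (c₁ : ℝ) + (c₃ : ℝ) * Real.sqrt p ≠ 0)
    (d : ℚ) (hd : d = -((D:ℚ) * N) * c₁ ^ 2 + (p:ℚ) * c₂ ^ 2 + (D:ℚ) * N * p * c₃ ^ 2)
    (hdneg : d < 0)
    (z : ℂ)
    (hz : z = ((c₂ : ℂ) * (Real.sqrt p : ℂ) + Complex.I * (Real.sqrt |(d : ℝ)| : ℂ))
      / ((D : ℂ) * N * ((c₁ : ℂ) + (c₃ : ℂ) * (Real.sqrt p : ℂ))))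
    (τ₁ τ₂ τ₃ : ℂ)
    (h₁ : τ₁ = ((D:ℂ) * N * z ^ 2 + 2 * z - 1) / (4 * z))
    (h₂ : τ₂ = -((D:ℂ) * N * z ^ 2 + 1) / (4 * (Real.sqrt p : ℂ) * z))
    (h₃ : τ₃ = ((D:ℂ) * N * z ^ 2 - 2 * (s:ℂ) * D * N * z - 1) / (4 * (p:ℂ) * z)) :
    -(c₁ : ℂ) * τ₂ + (p : ℂ) * (c₃ : ℂ) * τ₃ - ((c₂ : ℂ) - (s : ℂ) * D * N * (c₃ : ℂ)) / 2
      = 0 := by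
  have hp0 : (0:ℝ) < p := by exact_mod_cast hp
  have hr2 : ((Real.sqrt p : ℝ) : ℂ)^2 = (p:ℂ) := by
    have : (Real.sqrt p)^2 = (p:ℝ) := Real.sq_sqrt hp0.le
    exact_mod_cast this
  have hrne : ((Real.sqrt p : ℝ) : ℂ) ≠ 0 := by
    simpa using (Real.sqrt_pos.mpr hp0).ne'
  have hdlt : ((d:ℝ)) < 0 := by exact_mod_cast hdneg
  have hw2 : ((Real.sqrt |(d:ℝ)| : ℝ) : ℂ)^2 = -((d:ℚ):ℂ) := by
    have h1 : (Real.sqrt |(d:ℝ)|)^2 = |(d:ℝ)| := Real.sq_sqrt (abs_nonneg _)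
    rw [abs_of_neg hdlt] at h1 ⊢
    exact_mod_cast h1
  have hwpos : 0 < Real.sqrt |(d:ℝ)| := Real.sqrt_pos.mpr (abs_pos.mpr hdlt.ne)
  have hcne : (c₁:ℂ) + (c₃:ℂ) * ((Real.sqrt p : ℝ) : ℂ) ≠ 0 := by
    intro h
    apply hne
    have := congrArg Complex.re h
    simpa using this
  have hDN : ((D:ℂ) * N) ≠ 0 := by
    have h1 : (D:ℂ) ≠ 0 := Nat.cast_ne_zero.mpr hD.ne'
    have h2 : (N:ℂ) ≠ 0 := Nat.cast_ne_zero.mpr hN.ne'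
    exact mul_ne_zero h1 h2
  have hzne : z ≠ 0 := by
    rw [hz]
    apply div_ne_zero
    · intro h
      have := congrArg Complex.im h
      simp at this
      exact hdlt.ne (by exact_mod_cast this)
    · exact mul_ne_zero hDN hcne
  have hd' : ((d:ℚ):ℂ) = -((D:ℂ) * N) * (c₁:ℂ)^2 + (p:ℂ) * (c₂:ℂ)^2 + (D:ℂ)*N*(p:ℂ)*(c₃:ℂ)^2 := by
    exact_mod_cast congrArg (fun q : ℚ => (q:ℂ)) hd
  set r : ℂ := ((Real.sqrt p : ℝ) : ℂ) with hrdef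
  set w : ℂ := ((Real.sqrt |(d:ℝ)| : ℝ) : ℂ) with hwdef
  have hpne : ((p:ℚ):ℂ) ≠ 0 := by
    exact_mod_cast Nat.cast_ne_zero.mpr hp.ne'
  have hp2 : ((p:ℕ):ℂ) ≠ 0 := Nat.cast_ne_zero.mpr hp.ne'
  set B : ℂ := (D:ℂ)*N*((c₁:ℂ)+(c₃:ℂ)*r) with hBdef
  set A : ℂ := (c₂:ℂ)*r + Complex.I*w with hAdef
  have hB : B ≠ 0 := mul_ne_zero hDN hcne
  have hzB : z * B = A := by rw [hz]; field_simp
  have key2 : ((c₁:ℂ)*((D:ℂ)*N*z^2+1) + r*(c₃:ℂ)*((D:ℂ)*N*z^2 - 2*(s:ℂ)*D*N*z - 1)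
      - 2*r*z*((c₂:ℂ) - (s:ℂ)*D*N*(c₃:ℂ))) * B^2 = 0 := by
    linear_combination ((((D:ℂ)*N*((c₁:ℂ)+r*(c₃:ℂ)))*(z*B + A) - 2*r*(c₂:ℂ)*B) * hzB)
      + (B*w^2) * Complex.I_sq - B * hw2
      - (B*((c₂:ℂ)^2 + (D:ℂ)*N*(c₃:ℂ)^2)) * hr2 + B * hd'
  have key : (c₁:ℂ)*((D:ℂ)*N*z^2+1) + r*(c₃:ℂ)*((D:ℂ)*N*z^2 - 2*(s:ℂ)*D*N*z - 1)
      - 2*r*z*((c₂:ℂ) - (s:ℂ)*D*N*(c₃:ℂ)) = 0 :=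
    (mul_eq_zero.mp key2).resolve_right (pow_ne_zero 2 hB)
  rw [h₂, h₃]
  field_simp
  linear_combination 2 * key
end
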